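/- arXiv:1011.5351 — 7 statements merged into one kernel-verified Lean document; each statement's English description precedes it below -/
import Mathlib

section
/- Let r_1 ≥ ... ≥ r_m and c_1 ≥ ... ≥ c_n be consistent monotone line sums with r_1 = n and c_1 = m, b_i = #{j : c_j ≥ i}, and α = (1/2)Σ_{i=1}^m |r_i − b_i|. Then α ≤ (m−1)(n−1)/4. -/
open Finset

/-- Number of points of `F` in row `i`. -/
def rowSum (F : Finset (ℤ × ℤ)) (i : ℤ) : ℕ := (F.filter fun p => p.1 = i).card

/-- Number of points of `F` in column `j`. -/
def colSum (F : Finset (ℤ × ℤ)) (j : ℤ) : ℕ := (F.filter fun p => p.2 = j).card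

lemma minsum_aux (n k : ℕ) (c : ℕ → ℕ) :
    ∑ i ∈ Icc 1 k, ((Icc 1 n).filter fun j => i ≤ c j).card
      = ∑ j ∈ Icc 1 n, min (c j) k := by
  simp only [Finset.card_filter]
  rw [Finset.sum_comm]
  apply Finset.sum_congr rfl
  intro j _
  have h1 : (∑ i ∈ Icc 1 k, if i ≤ c j then (1:ℕ) else 0)
      = ((Icc 1 k).filter fun i => i ≤ c j).card := by
    rw [Finset.card_filter]
  rw [h1]
  have h2 : (Icc 1 k).filter (fun i => i ≤ c j) = Icc 1 (min (c j) k) := by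
    ext i
    simp only [Finset.mem_filter, Finset.mem_Icc]
    omega
  rw [h2, Nat.card_Icc]
  omega

lemma core_ineq (B : ℤ) (e f : ℕ → ℤ) (M : ℕ)
    (he : ∀ i, 1 ≤ i → i ≤ M → 0 ≤ e i ∧ e i ≤ B)
    (hf : ∀ i, 1 ≤ i → i ≤ M → 0 ≤ f i ∧ f i ≤ B)
    (hmono : ∀ i i', 1 ≤ i → i ≤ i' → i' ≤ M → e i ≤ e i')
    (hpre : ∀ k, 1 ≤ k → k ≤ M → ∑ i ∈ Icc 1 k, f i ≤ ∑ i ∈ Icc 1 k, e i) :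
    ∀ K, 1 ≤ K → K ≤ M →
      B * ∑ i ∈ Icc 1 K, max (f i - e i) 0 ≤
        (∑ i ∈ Icc 1 K, e i * (B - e i)) + (∑ i ∈ Icc 1 K, (f i - e i)) * (B - e K) := by
  intro K
  induction K with
  | zero => omega
  | succ K ih =>
    intro _ hKM
    rcases Nat.eq_zero_or_pos K with rfl | hK1
    · simp only [Finset.Icc_self, Finset.sum_singleton]
      have h1 : f 1 ≤ e 1 := by
        have := hpre 1 le_rfl hKM
        simpa using this
      have he1 := he 1 le_rfl hKM
      have hf1 := hf 1 le_rfl hKM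
      rw [max_eq_right (by linarith)]
      nlinarith [mul_nonneg hf1.1 (sub_nonneg.2 he1.2)]
    · have hKM' : K ≤ M := by omega
      have IH := ih hK1 hKM'
      rw [Finset.sum_Icc_succ_top (by omega : 1 ≤ K + 1),
          Finset.sum_Icc_succ_top (by omega : 1 ≤ K + 1),
          Finset.sum_Icc_succ_top (by omega : 1 ≤ K + 1)]
      have hS : ∑ i ∈ Icc 1 K, (f i - e i) ≤ 0 := by
        rw [Finset.sum_sub_distrib]
        have := hpre K hK1 hKM'
        linarith
      set S := ∑ i ∈ Icc 1 K, (f i - e i) with hSdef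
      have hEK : e K ≤ e (K + 1) := hmono K (K + 1) hK1 (by omega) hKM
      have heK1 := he (K + 1) (by omega) hKM
      have hfK1 := hf (K + 1) (by omega) hKM
      have heK := he K hK1 hKM'
      rcases le_or_gt (f (K + 1) - e (K + 1)) 0 with hg | hg
      · rw [max_eq_right hg]
        nlinarith [mul_nonneg hfK1.1 (sub_nonneg.2 heK1.2),
          mul_nonneg (neg_nonneg.2 hS) (sub_nonneg.2 hEK)]
      · rw [max_eq_left (le_of_lt hg)]
        nlinarith [mul_nonneg heK1.1 (by linarith : (0:ℤ) ≤ B - f (K+1)),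
          mul_nonneg (neg_nonneg.2 hS) (sub_nonneg.2 hEK)]

/-- For consistent monotone line sums with `r 1 = n` and `c 1 = m`, the quantity
`α = (1/2) ∑ |rᵢ - bᵢ|` satisfies `α ≤ (m-1)(n-1)/4`, formalized as
`2 ∑ |rᵢ - bᵢ| ≤ (m-1)(n-1)`. -/
theorem alpha_le (m n : ℕ) (r c : ℕ → ℕ) (hm : 1 ≤ m) (hn : 1 ≤ n)
    (hr : ∀ i i' : ℕ, 1 ≤ i → i ≤ i' → i' ≤ m → r i' ≤ r i)
    (hc : ∀ j j' : ℕ, 1 ≤ j → j ≤ j' → j' ≤ n → c j' ≤ c j)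
    (hr1 : r 1 = n) (hc1 : c 1 = m)
    (hcons : ∃ F : Finset (ℤ × ℤ),
      F ⊆ Finset.Icc 1 (m : ℤ) ×ˢ Finset.Icc 1 (n : ℤ) ∧
      (∀ i ∈ Finset.Icc 1 m, rowSum F i = r i) ∧
      (∀ j ∈ Finset.Icc 1 n, colSum F j = c j))
    (b : ℕ → ℕ)
    (hb : ∀ i : ℕ, b i = ((Finset.Icc 1 n).filter fun j => i ≤ c j).card) :
    2 * ∑ i ∈ Finset.Icc 1 m, ((r i : ℤ) - b i).natAbs ≤ (m - 1) * (n - 1) := by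
  obtain ⟨F, hFsub, hrow, hcol⟩ := hcons
  have hmem : ∀ p ∈ F, 1 ≤ p.1 ∧ p.1 ≤ (m:ℤ) ∧ 1 ≤ p.2 ∧ p.2 ≤ (n:ℤ) := by
    intro p hp
    have := hFsub hp
    rw [Finset.mem_product, Finset.mem_Icc, Finset.mem_Icc] at this
    tauto
  -- r i ≤ n
  have hrn : ∀ i, 1 ≤ i → i ≤ m → r i ≤ n := by
    intro i h1 h2
    rw [← hrow i (Finset.mem_Icc.2 ⟨h1, h2⟩)]
    have hcard : ((Icc (1:ℤ) n).card) = n := by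
      rw [Int.card_Icc]; omega
    have hle : (F.filter fun p => p.1 = (i:ℤ)).card ≤ (Icc (1:ℤ) n).card := by
      apply Finset.card_le_card_of_injOn (f := Prod.snd)
      · intro p hp
        have := hmem p (Finset.mem_filter.1 hp).1
        exact Finset.mem_Icc.2 ⟨this.2.2.1, this.2.2.2⟩
      · intro p hp q hq hpq
        have h1' := (Finset.mem_filter.1 hp).2
        have h2' := (Finset.mem_filter.1 hq).2
        exact Prod.ext (h1'.trans h2'.symm) hpq
    rw [hcard] at hle
    exact hle
  -- c j ≤ m
  have hcm : ∀ j, 1 ≤ j → j ≤ n → c j ≤ m := by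
    intro j h1 h2
    rw [← hcol j (Finset.mem_Icc.2 ⟨h1, h2⟩)]
    have hcard : ((Icc (1:ℤ) m).card) = m := by
      rw [Int.card_Icc]; omega
    have hle : (F.filter fun p => p.2 = (j:ℤ)).card ≤ (Icc (1:ℤ) m).card := by
      apply Finset.card_le_card_of_injOn (f := Prod.fst)
      · intro p hp
        have := hmem p (Finset.mem_filter.1 hp).1
        exact Finset.mem_Icc.2 ⟨this.1, this.2.1⟩
      · intro p hp q hq hpq
        have h1' := (Finset.mem_filter.1 hp).2
        have h2' := (Finset.mem_filter.1 hq).2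
        exact Prod.ext hpq (h1'.trans h2'.symm)
    rw [hcard] at hle
    exact hle
  -- 1 ≤ r i
  have hC : (F.filter fun p => p.2 = ((1:ℕ):ℤ)).card = m := by
    have h1n : (1:ℕ) ∈ Icc 1 n := Finset.mem_Icc.2 ⟨le_rfl, hn⟩
    have := hcol 1 h1n
    rw [hc1] at this
    exact this
  have hr1' : ∀ i, 1 ≤ i → i ≤ m → 1 ≤ r i := by
    intro i h1 h2
    rw [← hrow i (Finset.mem_Icc.2 ⟨h1, h2⟩)]
    refine Finset.card_pos.2 ?_
    have himg : (F.filter fun p => p.2 = ((1:ℕ):ℤ)).image Prod.fst = Icc (1:ℤ) m := by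
      apply Finset.eq_of_subset_of_card_le
      · intro x hx
        obtain ⟨p, hp, rfl⟩ := Finset.mem_image.1 hx
        have := hmem p (Finset.mem_filter.1 hp).1
        exact Finset.mem_Icc.2 ⟨this.1, this.2.1⟩
      · rw [Finset.card_image_of_injOn, hC, Int.card_Icc]
        · omega
        · intro p hp q hq hpq
          have h1' := (Finset.mem_filter.1 hp).2
          have h2' := (Finset.mem_filter.1 hq).2
          exact Prod.ext hpq (h1'.trans h2'.symm)
    have hiimg : (i:ℤ) ∈ (F.filter fun p => p.2 = ((1:ℕ):ℤ)).image Prod.fst := by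
      rw [himg]
      exact Finset.mem_Icc.2 ⟨by exact_mod_cast h1, by exact_mod_cast h2⟩
    obtain ⟨p, hp, hpi⟩ := Finset.mem_image.1 hiimg
    exact ⟨p, Finset.mem_filter.2 ⟨(Finset.mem_filter.1 hp).1, hpi⟩⟩
  -- b bounds
  have hbn : ∀ i, b i ≤ n := by
    intro i
    rw [hb]
    refine le_trans (Finset.card_filter_le _ _) ?_
    rw [Nat.card_Icc]
    omega
  have hb1 : ∀ i, 1 ≤ i → i ≤ m → 1 ≤ b i := by
    intro i h1 h2
    rw [hb]
    refine Finset.card_pos.2 ⟨1, Finset.mem_filter.2 ⟨Finset.mem_Icc.2 ⟨le_rfl, hn⟩, ?_⟩⟩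
    rw [hc1]; exact h2
  -- column fiberwise decomposition
  have hcolfib : ∀ G : Finset (ℤ × ℤ), G ⊆ F →
      G.card = ∑ j ∈ Icc 1 n, (G.filter fun p => p.2 = (j:ℤ)).card := by
    intro G hG
    rw [Finset.card_eq_sum_card_fiberwise (f := fun p => p.2.toNat) (t := Icc 1 n)
      (fun p hp => by
        obtain ⟨hq1, hq2, hq3, hq4⟩ := hmem p (hG hp)
        exact Finset.mem_Icc.2 ⟨by show 1 ≤ p.2.toNat; omega, by show p.2.toNat ≤ n; omega⟩)]
    refine Finset.sum_congr rfl ?_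
    intro j hj
    congr 1
    ext p
    simp only [Finset.mem_filter]
    constructor
    · rintro ⟨hpG, ht⟩
      obtain ⟨hq1, hq2, hq3, hq4⟩ := hmem p (hG hpG)
      have ht' : p.2.toNat = j := ht
      exact ⟨hpG, by omega⟩
    · rintro ⟨hpG, ht⟩
      refine ⟨hpG, show p.2.toNat = j by omega⟩
  -- row counting for truncated set
  have hGrow : ∀ k, 1 ≤ k → k ≤ m →
      (F.filter fun p => p.1 ≤ (k:ℤ)).card = ∑ i ∈ Icc 1 k, r i := by
    intro k hk1 hkm
    rw [Finset.card_eq_sum_card_fiberwise (f := fun p => p.1.toNat) (t := Icc 1 k)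
      (fun p hp => by
        have hpF := (Finset.mem_filter.1 hp).1
        have hpk := (Finset.mem_filter.1 hp).2
        obtain ⟨hq1, hq2, hq3, hq4⟩ := hmem p hpF
        have hpk' : p.1 ≤ (k:ℤ) := hpk
        exact Finset.mem_Icc.2 ⟨by show 1 ≤ p.1.toNat; omega, by show p.1.toNat ≤ k; omega⟩)]
    refine Finset.sum_congr rfl ?_
    intro i hi
    have hi' := Finset.mem_Icc.1 hi
    rw [← hrow i (Finset.mem_Icc.2 ⟨hi'.1, le_trans hi'.2 hkm⟩)]
    show _ = (F.filter fun p => p.1 = (i:ℤ)).card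
    congr 1
    ext p
    simp only [Finset.mem_filter]
    constructor
    · rintro ⟨⟨hpF, hpk⟩, ht⟩
      obtain ⟨hq1, hq2, hq3, hq4⟩ := hmem p hpF
      have ht' : p.1.toNat = i := ht
      have hpk' : p.1 ≤ (k:ℤ) := hpk
      exact ⟨hpF, by omega⟩
    · rintro ⟨hpF, hpi⟩
      have hpi' : p.1 = (i:ℤ) := hpi
      refine ⟨⟨hpF, show p.1 ≤ (k:ℤ) by omega⟩, show p.1.toNat = i by omega⟩
  -- fibers of truncated set are ≤ min (c j) k
  have hfib_le : ∀ k, 1 ≤ k → k ≤ m → ∀ j, 1 ≤ j → j ≤ n →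
      ((F.filter fun p => p.1 ≤ (k:ℤ)).filter fun p => p.2 = (j:ℤ)).card ≤ min (c j) k := by
    intro k hk1 hkm j hj1 hjn
    refine le_min ?_ ?_
    · calc ((F.filter fun p => p.1 ≤ (k:ℤ)).filter fun p => p.2 = (j:ℤ)).card
          ≤ (F.filter fun p => p.2 = (j:ℤ)).card := by
            apply Finset.card_le_card
            intro p hp
            simp only [Finset.mem_filter] at hp ⊢
            tauto
        _ = c j := hcol j (Finset.mem_Icc.2 ⟨hj1, hjn⟩)
    · have hcard : ((Icc (1:ℤ) k).card) = k := by
        rw [Int.card_Icc]; omega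
      have hle : ((F.filter fun p => p.1 ≤ (k:ℤ)).filter fun p => p.2 = (j:ℤ)).card
          ≤ (Icc (1:ℤ) k).card := by
        apply Finset.card_le_card_of_injOn (f := Prod.fst)
        · intro p hp
          simp only [Finset.mem_coe, Finset.mem_filter] at hp
          obtain ⟨hq1, hq2, hq3, hq4⟩ := hmem p hp.1.1
          exact Finset.mem_Icc.2 ⟨by omega, hp.1.2⟩
        · intro p hp q hq hpq
          have hp' := Finset.mem_filter.1 hp
          have hq' := Finset.mem_filter.1 hq
          exact Prod.ext hpq (hp'.2.trans hq'.2.symm)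
      rw [hcard] at hle
      exact hle
  -- prefix domination
  have hprefix : ∀ k, 1 ≤ k → k ≤ m →
      ∑ i ∈ Icc 1 k, r i ≤ ∑ i ∈ Icc 1 k, b i := by
    intro k hk1 hkm
    rw [← hGrow k hk1 hkm, hcolfib _ (Finset.filter_subset _ _)]
    calc ∑ j ∈ Icc 1 n, ((F.filter fun p => p.1 ≤ (k:ℤ)).filter fun p => p.2 = (j:ℤ)).card
        ≤ ∑ j ∈ Icc 1 n, min (c j) k := by
          refine Finset.sum_le_sum ?_
          intro j hj
          have hj' := Finset.mem_Icc.1 hj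
          exact hfib_le k hk1 hkm j hj'.1 hj'.2
      _ = ∑ i ∈ Icc 1 k, b i := by
          rw [← minsum_aux n k c]
          exact Finset.sum_congr rfl fun i _ => (hb i).symm
  -- total equality
  have htotal : ∑ i ∈ Icc 1 m, r i = ∑ i ∈ Icc 1 m, b i := by
    have hFall : F.filter (fun p => p.1 ≤ (m:ℤ)) = F :=
      Finset.filter_true_of_mem (fun p hp => (hmem p hp).2.1)
    have h1 : ∑ i ∈ Icc 1 m, r i = F.card := by
      rw [← hGrow m hm le_rfl, hFall]
    have h2 : F.card = ∑ j ∈ Icc 1 n, c j := by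
      rw [hcolfib F (Finset.Subset.refl F)]
      refine Finset.sum_congr rfl ?_
      intro j hj
      exact hcol j hj
    have h3 : ∑ i ∈ Icc 1 m, b i = ∑ j ∈ Icc 1 n, c j := by
      calc ∑ i ∈ Icc 1 m, b i
          = ∑ i ∈ Icc 1 m, ((Icc 1 n).filter fun j => i ≤ c j).card :=
            Finset.sum_congr rfl fun i _ => hb i
        _ = ∑ j ∈ Icc 1 n, min (c j) m := minsum_aux n m c
        _ = ∑ j ∈ Icc 1 n, c j := by
            refine Finset.sum_congr rfl ?_
            intro j hj
            have hj' := Finset.mem_Icc.1 hj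
            exact min_eq_left (hcm j hj'.1 hj'.2)
    rw [h1, h2, h3]
  -- case n = 1
  rcases eq_or_lt_of_le hn with hn1 | hn2
  · have hz : ∑ i ∈ Finset.Icc 1 m, ((r i : ℤ) - b i).natAbs = 0 := by
      refine Finset.sum_eq_zero ?_
      intro i hi
      have hi' := Finset.mem_Icc.1 hi
      have h1 := hr1' i hi'.1 hi'.2
      have h2 := hrn i hi'.1 hi'.2
      have h3 := hb1 i hi'.1 hi'.2
      have h4 := hbn i
      have : (r i : ℤ) - b i = 0 := by omega
      rw [this]
      rfl
    rw [hz]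
    exact Nat.zero_le _
  -- main case n ≥ 2
  · have hcore := core_ineq ((n:ℤ) - 1) (fun i => (n:ℤ) - r i) (fun i => (n:ℤ) - b i) m
      (fun i h1 h2 => by
        have := hrn i h1 h2; have := hr1' i h1 h2
        constructor <;> [skip; skip] <;> omega)
      (fun i h1 h2 => by
        have := hbn i; have := hb1 i h1 h2
        constructor <;> omega)
      (fun i i' h1 h2 h3 => by
        have := hr i i' h1 h2 h3
        omega)
      (fun k h1 h2 => by
        have hp := hprefix k h1 h2
        have hcast : ((∑ i ∈ Icc 1 k, r i : ℕ) : ℤ) ≤ ((∑ i ∈ Icc 1 k, b i : ℕ) : ℤ) := by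
          exact_mod_cast hp
        push_cast at hcast
        rw [Finset.sum_sub_distrib, Finset.sum_sub_distrib]
        linarith)
      m hm le_rfl
    -- simplify the integrands
    have hsimp1 : ∑ i ∈ Icc 1 m, max (((n:ℤ) - b i) - ((n:ℤ) - r i)) 0
        = ∑ i ∈ Icc 1 m, max ((r i : ℤ) - b i) 0 := by
      refine Finset.sum_congr rfl ?_
      intro i _
      have : ((n:ℤ) - b i) - ((n:ℤ) - r i) = (r i : ℤ) - b i := by ring
      rw [this]
    have hzero : ∑ i ∈ Icc 1 m, (((n:ℤ) - b i) - ((n:ℤ) - r i)) = 0 := by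
      have hcast : ((∑ i ∈ Icc 1 m, r i : ℕ) : ℤ) = ((∑ i ∈ Icc 1 m, b i : ℕ) : ℤ) := by
        exact_mod_cast htotal
      push_cast at hcast
      have heq : ∀ i ∈ Icc 1 m, ((n:ℤ) - b i) - ((n:ℤ) - r i) = (r i : ℤ) - b i := by
        intro i _; ring
      rw [Finset.sum_congr rfl heq, Finset.sum_sub_distrib]
      linarith
    rw [hsimp1, hzero, zero_mul, add_zero] at hcore
    -- bound the quadratic sum
    have h1m : (1:ℕ) ∈ Icc 1 m := Finset.mem_Icc.2 ⟨le_rfl, hm⟩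
    have hquad : 4 * (∑ i ∈ Icc 1 m, ((n:ℤ) - r i) * (((n:ℤ) - 1) - ((n:ℤ) - r i)))
        ≤ ((m:ℤ) - 1) * ((n:ℤ) - 1)^2 := by
      rw [← Finset.add_sum_erase _ _ h1m, Finset.Icc_erase_left]
      have ht1 : ((n:ℤ) - r 1) * (((n:ℤ) - 1) - ((n:ℤ) - r 1)) = 0 := by
        rw [hr1]; ring
      rw [ht1, zero_add, Finset.mul_sum]
      have hbd : ∀ i ∈ Ioc 1 m,
          4 * (((n:ℤ) - r i) * (((n:ℤ) - 1) - ((n:ℤ) - r i))) ≤ ((n:ℤ) - 1)^2 := by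
        intro i hi
        have hi' := Finset.mem_Ioc.1 hi
        have h1 := hr1' i (by omega) hi'.2
        have h2 := hrn i (by omega) hi'.2
        nlinarith [sq_nonneg ((n:ℤ) - 1 - 2 * ((n:ℤ) - r i))]
      calc ∑ i ∈ Ioc 1 m, 4 * (((n:ℤ) - r i) * (((n:ℤ) - 1) - ((n:ℤ) - r i)))
          ≤ (Ioc 1 m).card • ((n:ℤ) - 1)^2 := Finset.sum_le_card_nsmul _ _ _ hbd
        _ = ((m:ℤ) - 1) * ((n:ℤ) - 1)^2 := by
            rw [Nat.card_Ioc, nsmul_eq_mul, Nat.cast_sub hm]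
            norm_num
    -- |d| = 2 max d 0 - d
    have habs : ∑ i ∈ Icc 1 m, |(r i : ℤ) - b i|
        = 2 * ∑ i ∈ Icc 1 m, max ((r i : ℤ) - b i) 0 - ∑ i ∈ Icc 1 m, ((r i : ℤ) - b i) := by
      rw [Finset.mul_sum, ← Finset.sum_sub_distrib]
      refine Finset.sum_congr rfl ?_
      intro i _
      rcases le_total ((r i : ℤ) - b i) 0 with h | h
      · rw [abs_of_nonpos h, max_eq_right h]; ring
      · rw [abs_of_nonneg h, max_eq_left h]; ring
    have hsum0 : ∑ i ∈ Icc 1 m, ((r i : ℤ) - b i) = 0 := by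
      have heq : ∀ i ∈ Icc 1 m, ((r i : ℤ) - b i) = ((n:ℤ) - b i) - ((n:ℤ) - r i) := by
        intro i _; ring
      rw [Finset.sum_congr rfl heq]
      exact hzero
    have hgoal : (2 * ∑ i ∈ Finset.Icc 1 m, ((r i : ℤ) - b i).natAbs : ℤ)
        ≤ ((m:ℤ) - 1) * ((n:ℤ) - 1) := by
      push_cast
      rw [habs, hsum0, sub_zero]
      have hpos : (0:ℤ) < (n:ℤ) - 1 := by
        have : (1:ℤ) < (n:ℤ) := by exact_mod_cast hn2
        linarith
      apply le_of_mul_le_mul_left ?_ hpos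
      calc ((n:ℤ) - 1) * (2 * (2 * ∑ i ∈ Icc 1 m, max ((r i : ℤ) - b i) 0))
          = 4 * (((n:ℤ) - 1) * ∑ i ∈ Icc 1 m, max ((r i : ℤ) - b i) 0) := by ring
        _ ≤ 4 * (∑ i ∈ Icc 1 m, ((n:ℤ) - r i) * (((n:ℤ) - 1) - ((n:ℤ) - r i))) := by
            linarith
        _ ≤ ((m:ℤ) - 1) * ((n:ℤ) - 1)^2 := hquad
        _ = ((n:ℤ) - 1) * (((m:ℤ) - 1) * ((n:ℤ) - 1)) := by ring
    have hfin : (2 * ∑ i ∈ Finset.Icc 1 m, ((r i : ℤ) - b i).natAbs : ℤ)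
        ≤ (((m - 1) * (n - 1) : ℕ) : ℤ) := by
      have hmn : (((m - 1) * (n - 1) : ℕ) : ℤ) = ((m:ℤ) - 1) * ((n:ℤ) - 1) := by
        push_cast [Nat.cast_sub hm, Nat.cast_sub hn]
        ring
      rw [hmn]
      exact hgoal
    exact_mod_cast hfin
end

section
/- Let r_1 ≥ ... ≥ r_m and c_1 ≥ ... ≥ c_n be monotone nonnegative integer sequences (not necessarily with c_1 = m, r_1 = n) that are consistent, and let α = (1/2)Σ_{i=1}^{max(m,c_1)} |r_i − b_i| with b_i = #{j : c_j ≥ i} (setting r_i = 0 for i > m). Then α ≤ mn/4. -/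
open Finset

lemma key_ineq (m n : ℕ) (d : ℕ → ℤ)
    (hsum : ∑ i ∈ Finset.Icc 1 m, d i = 0)
    (hpair : ∀ i ∈ Finset.Icc 1 m, ∀ j ∈ Finset.Icc 1 m, d i - d j ≤ (n : ℤ)) :
    2 * ∑ i ∈ Finset.Icc 1 m, |d i| ≤ (m : ℤ) * n := by
  set I := Finset.Icc 1 m with hI
  set P := I.filter (fun i => 0 < d i) with hP
  set Q := I.filter (fun i => d i < 0) with hQ
  set T := ∑ i ∈ P, d i with hTdef
  have hQsub : Q ⊆ I.filter (fun i => ¬ 0 < d i) := by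
    intro x hx
    simp only [hQ, Finset.mem_filter] at hx ⊢
    exact ⟨hx.1, by linarith [hx.2]⟩
  have h2 : ∑ i ∈ I.filter (fun i => ¬ 0 < d i), d i = ∑ i ∈ Q, d i := by
    refine (Finset.sum_subset hQsub ?_).symm
    intro x hx hxq
    simp only [hQ, Finset.mem_filter, not_and, not_lt] at hx hxq
    linarith [hxq hx.1, hx.2]
  have hQP : ∑ i ∈ Q, d i = -T := by
    have h1 : ∑ i ∈ P, d i + ∑ i ∈ I.filter (fun i => ¬ 0 < d i), d i = 0 := by
      rw [Finset.sum_filter_add_sum_filter_not]; exact hsum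
    rw [h2] at h1; linarith
  have habs : ∑ i ∈ I, |d i| = 2 * T := by
    have e1 : ∑ i ∈ P, |d i| = T := by
      apply Finset.sum_congr rfl
      intro x hx
      simp only [hP, Finset.mem_filter] at hx
      exact abs_of_pos hx.2
    have e2 : ∑ i ∈ I.filter (fun i => ¬ 0 < d i), |d i| = ∑ i ∈ Q, |d i| := by
      refine (Finset.sum_subset hQsub ?_).symm
      intro x hx hxq
      simp only [hQ, Finset.mem_filter, not_and, not_lt] at hx hxq
      have : d x = 0 := le_antisymm hx.2 (hxq hx.1)
      simp [this]
    have e3 : ∑ i ∈ Q, |d i| = -∑ i ∈ Q, d i := by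
      rw [← Finset.sum_neg_distrib]
      apply Finset.sum_congr rfl
      intro x hx
      simp only [hQ, Finset.mem_filter] at hx
      exact abs_of_neg hx.2
    calc ∑ i ∈ I, |d i| = ∑ i ∈ P, |d i| + ∑ i ∈ I.filter (fun i => ¬ 0 < d i), |d i| := by
          rw [Finset.sum_filter_add_sum_filter_not]
      _ = T + (-∑ i ∈ Q, d i) := by rw [e1, e2, e3]
      _ = 2 * T := by rw [hQP]; ring
  have hT : 0 ≤ T := by
    apply Finset.sum_nonneg
    intro i hi
    simp only [hP, Finset.mem_filter] at hi
    exact le_of_lt hi.2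
  have hkey : ((P.card : ℤ) + Q.card) * T ≤ (P.card : ℤ) * Q.card * n := by
    have h1 : ∑ i ∈ P, ∑ j ∈ Q, (d i - d j) ≤ ∑ i ∈ P, ∑ j ∈ Q, (n : ℤ) := by
      apply Finset.sum_le_sum
      intro i hi
      apply Finset.sum_le_sum
      intro j hj
      exact hpair i (Finset.filter_subset _ _ hi) j (Finset.filter_subset _ _ hj)
    have h2 : ∑ i ∈ P, ∑ j ∈ Q, (d i - d j) = ((P.card : ℤ) + Q.card) * T := by
      have : ∀ i ∈ P, ∑ j ∈ Q, (d i - d j) = (Q.card : ℤ) * d i - ∑ j ∈ Q, d j := by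
        intro i _
        rw [Finset.sum_sub_distrib, Finset.sum_const, nsmul_eq_mul]
      rw [Finset.sum_congr rfl this, Finset.sum_sub_distrib, ← Finset.mul_sum,
        Finset.sum_const, nsmul_eq_mul, hQP, ← hTdef]
      ring
    have h3 : ∑ i ∈ P, ∑ j ∈ Q, (n : ℤ) = (P.card : ℤ) * Q.card * n := by
      simp [Finset.sum_const, nsmul_eq_mul]; ring
    rw [h2] at h1; rw [h3] at h1; exact h1
  have hdisj : Disjoint P Q := by
    rw [Finset.disjoint_left]
    intro a ha hb
    simp only [hP, hQ, Finset.mem_filter] at ha hb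
    linarith [ha.2, hb.2]
  have hcard : P.card + Q.card ≤ m := by
    have h1 : (P ∪ Q).card = P.card + Q.card := Finset.card_union_of_disjoint hdisj
    have h2 : (P ∪ Q).card ≤ I.card :=
      Finset.card_le_card (Finset.union_subset (Finset.filter_subset _ _) (Finset.filter_subset _ _))
    have h3 : I.card = m := by simp [hI]
    omega
  rw [habs]
  rcases Nat.eq_zero_or_pos (P.card + Q.card) with h0 | hpos
  · have : P = ∅ := Finset.card_eq_zero.mp (by omega)
    rw [hTdef, this]
    simp
    positivity
  · have hs : (0 : ℤ) < (P.card : ℤ) + Q.card := by exact_mod_cast hpos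
    have hm' : (P.card : ℤ) + Q.card ≤ m := by exact_mod_cast hcard
    have hn' : (0 : ℤ) ≤ n := Int.natCast_nonneg n
    have h4 : ((P.card : ℤ) + Q.card) * (2 * (2 * T)) ≤ ((P.card : ℤ) + Q.card) * ((m : ℤ) * n) := by
      nlinarith [hkey, mul_nonneg hn' (sq_nonneg ((P.card : ℤ) - Q.card)),
        mul_le_mul_of_nonneg_right hm' (mul_nonneg (le_of_lt hs) hn'),
        Int.natCast_nonneg P.card, Int.natCast_nonneg Q.card]
    exact le_of_mul_le_mul_left h4 hs



lemma icc_map (m : ℕ) :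
    Finset.Icc (1 : ℤ) (m : ℤ) = (Finset.Icc 1 m).map ⟨(Nat.cast : ℕ → ℤ), Nat.cast_injective⟩ := by
  ext a
  simp only [Finset.mem_Icc, Finset.mem_map, Function.Embedding.coeFn_mk]
  constructor
  · rintro ⟨h1, h2⟩
    exact ⟨a.toNat, by omega, by omega⟩
  · rintro ⟨x, ⟨h1, h2⟩, rfl⟩
    exact ⟨by exact_mod_cast h1, by exact_mod_cast h2⟩

/-- For consistent monotone line sums (not necessarily normalized), the quantity
`α = (1/2) ∑_{i=1}^{max(m, c 1)} |rᵢ - bᵢ|` (with `rᵢ = 0` for `i > m`) satisfies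
`α ≤ mn/4`, formalized as `2 ∑ |rᵢ - bᵢ| ≤ m * n`. -/
theorem alpha_le_general (m n : ℕ) (r c : ℕ → ℕ) (hm : 1 ≤ m) (hn : 1 ≤ n)
    (hr : ∀ i i' : ℕ, 1 ≤ i → i ≤ i' → i' ≤ m → r i' ≤ r i)
    (hc : ∀ j j' : ℕ, 1 ≤ j → j ≤ j' → j' ≤ n → c j' ≤ c j)
    (hr0 : ∀ i : ℕ, m < i → r i = 0)
    (hcons : ∃ F : Finset (ℤ × ℤ),
      F ⊆ Finset.Icc 1 (m : ℤ) ×ˢ Finset.Icc 1 (n : ℤ) ∧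
      (∀ i ∈ Finset.Icc 1 m, rowSum F i = r i) ∧
      (∀ j ∈ Finset.Icc 1 n, colSum F j = c j))
    (b : ℕ → ℕ)
    (hb : ∀ i : ℕ, b i = ((Finset.Icc 1 n).filter fun j => i ≤ c j).card) :
    2 * ∑ i ∈ Finset.Icc 1 (max m (c 1)), ((r i : ℤ) - b i).natAbs ≤ m * n := by
  obtain ⟨F, hsub, hrow, hcol⟩ := hcons
  -- column sums are at most m
  have hcm : ∀ j : ℕ, 1 ≤ j → j ≤ n → c j ≤ m := by
    intro j h1 h2
    rw [← hcol j (Finset.mem_Icc.mpr ⟨h1, h2⟩)]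
    unfold colSum
    have : (F.filter fun p => p.2 = (j : ℤ)).card ≤ (Finset.Icc (1:ℤ) (m:ℤ)).card := by
      apply Finset.card_le_card_of_injOn Prod.fst
      · intro p hp
        simp only [Finset.mem_coe, Finset.mem_filter] at hp
        exact (Finset.mem_product.mp (hsub hp.1)).1
      · intro p hp q hq hpq
        simp only [Finset.coe_filter, Set.mem_setOf_eq] at hp hq
        exact Prod.ext hpq (hp.2.trans hq.2.symm)
    simpa [Int.card_Icc] using this
  -- row sums are at most n
  have hrn : ∀ i : ℕ, 1 ≤ i → i ≤ m → r i ≤ n := by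
    intro i h1 h2
    rw [← hrow i (Finset.mem_Icc.mpr ⟨h1, h2⟩)]
    unfold rowSum
    have : (F.filter fun p => p.1 = (i : ℤ)).card ≤ (Finset.Icc (1:ℤ) (n:ℤ)).card := by
      apply Finset.card_le_card_of_injOn Prod.snd
      · intro p hp
        simp only [Finset.mem_coe, Finset.mem_filter] at hp
        exact (Finset.mem_product.mp (hsub hp.1)).2
      · intro p hp q hq hpq
        simp only [Finset.coe_filter, Set.mem_setOf_eq] at hp hq
        exact Prod.ext (hp.2.trans hq.2.symm) hpq
    simpa [Int.card_Icc] using this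
  -- b is bounded by n
  have hbn : ∀ i : ℕ, b i ≤ n := by
    intro i
    rw [hb i]
    calc ((Finset.Icc 1 n).filter fun j => i ≤ c j).card ≤ (Finset.Icc 1 n).card :=
          Finset.card_filter_le _ _
      _ = n := by simp
  -- b is antitone
  have hbmono : ∀ i i' : ℕ, i ≤ i' → b i' ≤ b i := by
    intro i i' h
    rw [hb i, hb i']
    apply Finset.card_le_card
    apply Finset.monotone_filter_right
    intro j hj
    omega
  -- total of row sums = F.card
  have hrtot : ∑ i ∈ Finset.Icc 1 m, r i = F.card := by
    have h1 : F.card = ∑ i ∈ Finset.Icc (1:ℤ) (m:ℤ), rowSum F i := by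
      apply Finset.card_eq_sum_card_fiberwise
      intro p hp
      exact (Finset.mem_product.mp (hsub hp)).1
    rw [h1, icc_map, Finset.sum_map]
    apply Finset.sum_congr rfl
    intro i hi
    exact (hrow i hi).symm
  -- total of column sums = F.card
  have hctot : ∑ j ∈ Finset.Icc 1 n, c j = F.card := by
    have h1 : F.card = ∑ j ∈ Finset.Icc (1:ℤ) (n:ℤ), colSum F j := by
      apply Finset.card_eq_sum_card_fiberwise
      intro p hp
      exact (Finset.mem_product.mp (hsub hp)).2
    rw [h1, icc_map, Finset.sum_map]
    apply Finset.sum_congr rfl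
    intro j hj
    exact (hcol j hj).symm
  -- total of b = total of c
  have hbtot : ∑ i ∈ Finset.Icc 1 m, b i = ∑ j ∈ Finset.Icc 1 n, c j := by
    have h1 : ∀ i, b i = ∑ j ∈ Finset.Icc 1 n, if i ≤ c j then 1 else 0 := by
      intro i
      rw [hb i, Finset.card_filter]
    calc ∑ i ∈ Finset.Icc 1 m, b i
        = ∑ i ∈ Finset.Icc 1 m, ∑ j ∈ Finset.Icc 1 n, if i ≤ c j then 1 else 0 := by
          exact Finset.sum_congr rfl fun i _ => h1 i
      _ = ∑ j ∈ Finset.Icc 1 n, ∑ i ∈ Finset.Icc 1 m, if i ≤ c j then 1 else 0 :=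
          Finset.sum_comm
      _ = ∑ j ∈ Finset.Icc 1 n, c j := by
          apply Finset.sum_congr rfl
          intro j hj
          rw [← Finset.card_filter]
          have hjm := hcm j (Finset.mem_Icc.mp hj).1 (Finset.mem_Icc.mp hj).2
          have : (Finset.Icc 1 m).filter (fun i => i ≤ c j) = Finset.Icc 1 (c j) := by
            ext x
            simp only [Finset.mem_filter, Finset.mem_Icc]
            omega
          rw [this, Nat.card_Icc]
          omega
  -- max m (c 1) = m
  have hmax : max m (c 1) = m := Nat.max_eq_left (hcm 1 le_rfl hn)
  rw [hmax]
  -- pass to ℤ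
  have hgoal : 2 * ∑ i ∈ Finset.Icc 1 m, |(r i : ℤ) - b i| ≤ (m : ℤ) * n := by
    apply key_ineq
    · rw [Finset.sum_sub_distrib]
      have : (∑ i ∈ Finset.Icc 1 m, (r i : ℤ)) = ∑ i ∈ Finset.Icc 1 m, (b i : ℤ) := by
        rw [← Nat.cast_sum, ← Nat.cast_sum, hrtot, hbtot, hctot]
      rw [this]; ring
    · intro i hi j hj
      simp only [Finset.mem_Icc] at hi hj
      rcases le_total i j with h | h
      · have h1 : r i ≤ n := hrn i hi.1 hi.2
        have h2 : b j ≤ b i := hbmono i j h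
        have h3 : (0:ℤ) ≤ r j := Int.natCast_nonneg _
        have h2' : (b j : ℤ) ≤ b i := by exact_mod_cast h2
        have h1' : (r i : ℤ) ≤ n := by exact_mod_cast h1
        linarith
      · have h1 : r i ≤ r j := hr j i hj.1 h hi.2
        have h2 : b j ≤ n := hbn j
        have h3 : (0:ℤ) ≤ b i := Int.natCast_nonneg _
        have h1' : (r i : ℤ) ≤ r j := by exact_mod_cast h1
        have h2' : (b j : ℤ) ≤ n := by exact_mod_cast h2
        linarith
  have : ((2 * ∑ i ∈ Finset.Icc 1 m, ((r i : ℤ) - b i).natAbs : ℕ) : ℤ) ≤ (m : ℤ) * n := by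
    push_cast [Int.natCast_natAbs]
    exact hgoal
  exact_mod_cast this
end

section
/- Let n = r_1 ≥ ... ≥ r_m and m = c_1 ≥ ... ≥ c_n be consistent line sums with n ≥ 2. Then there exists a finite set F₂ with these row and column sums such that L_h(F₂) ≤ 4n − 4. -/
open Finset

/-- Length of the horizontal boundary of `F`: the number of vertically adjacent pairs
of lattice points with exactly one of the two points in `F`. -/
def Lh (F : Finset (ℤ × ℤ)) : ℕ :=
  ((F ∪ F.image fun p => (p.1 - 1, p.2)).filter
    fun p => decide (p ∈ F) ≠ decide ((p.1 + 1, p.2) ∈ F)).card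

/-- Length of the vertical boundary of `F`: the number of horizontally adjacent pairs
of lattice points with exactly one of the two points in `F`. -/
def Lv (F : Finset (ℤ × ℤ)) : ℕ :=
  ((F ∪ F.image fun p => (p.1, p.2 - 1)).filter
    fun p => decide (p ∈ F) ≠ decide ((p.1, p.2 + 1) ∈ F)).card

lemma card_column (F : Finset (ℤ×ℤ)) (j : ℤ) :
    ((F.filter fun p => p.2 = j).image Prod.fst).card = colSum F j := by
  rw [colSum]
  apply Finset.card_image_of_injOn
  intro p hp q hq h
  simp only [coe_filter, Set.mem_setOf_eq] at hp hq
  exact Prod.ext h (hp.2.trans hq.2.symm)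

lemma card_row (F : Finset (ℤ×ℤ)) (i : ℤ) :
    ((F.filter fun p => p.1 = i).image Prod.snd).card = rowSum F i := by
  rw [rowSum]
  apply Finset.card_image_of_injOn
  intro p hp q hq h
  simp only [coe_filter, Set.mem_setOf_eq] at hp hq
  exact Prod.ext (hp.2.trans hq.2.symm) h

lemma rowSum_union (A B : Finset (ℤ×ℤ)) (h : Disjoint A B) (i : ℤ) :
    rowSum (A ∪ B) i = rowSum A i + rowSum B i := by
  unfold rowSum
  rw [filter_union, card_union_of_disjoint (h.mono (filter_subset _ _) (filter_subset _ _))]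

lemma colSum_union (A B : Finset (ℤ×ℤ)) (h : Disjoint A B) (j : ℤ) :
    colSum (A ∪ B) j = colSum A j + colSum B j := by
  unfold colSum
  rw [filter_union, card_union_of_disjoint (h.mono (filter_subset _ _) (filter_subset _ _))]

lemma rowSum_prod (S : Finset ℤ) (j i : ℤ) :
    rowSum (S ×ˢ ({j} : Finset ℤ)) i = if i ∈ S then 1 else 0 := by
  unfold rowSum
  split_ifs with h
  · rw [show ((S ×ˢ ({j} : Finset ℤ)).filter fun p => p.1 = i) = {(i, j)} from ?_]
    · simp
    · ext ⟨x, y⟩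
      simp only [mem_filter, mem_product, mem_singleton, Prod.mk.injEq]
      constructor
      · rintro ⟨⟨hx, hy⟩, rfl⟩; exact ⟨rfl, hy⟩
      · rintro ⟨rfl, rfl⟩; exact ⟨⟨h, rfl⟩, rfl⟩
  · rw [show ((S ×ˢ ({j} : Finset ℤ)).filter fun p => p.1 = i) = ∅ from ?_]
    · simp
    · ext ⟨x, y⟩
      simp only [mem_filter, mem_product, mem_singleton, notMem_empty, iff_false]
      rintro ⟨⟨hx, hy⟩, rfl⟩; exact h hx

lemma colSum_prod (S : Finset ℤ) (j j' : ℤ) :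
    colSum (S ×ˢ ({j} : Finset ℤ)) j' = if j' = j then S.card else 0 := by
  unfold colSum
  split_ifs with h
  · subst h
    rw [show ((S ×ˢ ({j'} : Finset ℤ)).filter fun p => p.2 = j') = S ×ˢ {j'} from ?_]
    · simp
    · apply filter_true_of_mem
      rintro ⟨x, y⟩ hp
      simp only [mem_product, mem_singleton] at hp
      exact hp.2
  · rw [show ((S ×ˢ ({j} : Finset ℤ)).filter fun p => p.2 = j') = ∅ from ?_]
    · simp
    · ext ⟨x, y⟩
      simp only [mem_filter, mem_product, mem_singleton, notMem_empty, iff_false]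
      rintro ⟨⟨hx, rfl⟩, rfl⟩; exact h rfl

lemma Lh_union_column (A : Finset (ℤ×ℤ)) (S : Finset ℤ) (j : ℤ)
    (hA : ∀ p ∈ A, p.2 ≠ j) :
    Lh (A ∪ S ×ˢ ({j} : Finset ℤ)) = Lh A + Lh (S ×ˢ ({j} : Finset ℤ)) := by
  classical
  set B := S ×ˢ ({j} : Finset ℤ) with hB
  have hBj : ∀ p ∈ B, p.2 = j := by
    rintro ⟨x, y⟩ hp
    simp only [hB, mem_product, mem_singleton] at hp
    exact hp.2
  have hmemA : ∀ p : ℤ×ℤ, p.2 ≠ j → (p ∈ A ∪ B ↔ p ∈ A) := by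
    intro p hp
    simp only [mem_union]
    constructor
    · rintro (h | h)
      · exact h
      · exact absurd (hBj p h) hp
    · exact Or.inl
  have hmemB : ∀ p : ℤ×ℤ, p.2 = j → (p ∈ A ∪ B ↔ p ∈ B) := by
    intro p hp
    simp only [mem_union]
    constructor
    · rintro (h | h)
      · exact absurd hp (hA p h)
      · exact h
    · exact Or.inr
  unfold Lh
  have himg : ((A ∪ B).image fun p => (p.1 - 1, p.2)) =
      (A.image fun p => (p.1 - 1, p.2)) ∪ (B.image fun p => (p.1 - 1, p.2)) :=
    image_union _ _
  have hamb : (A ∪ B) ∪ ((A ∪ B).image fun p => (p.1 - 1, p.2)) =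
      (A ∪ A.image fun p => (p.1 - 1, p.2)) ∪ (B ∪ B.image fun p => (p.1 - 1, p.2)) := by
    rw [himg]
    ext p; simp only [mem_union]; tauto
  rw [hamb, filter_union]
  have hambA : ∀ p ∈ (A ∪ A.image fun p => (p.1 - 1, p.2)), p.2 ≠ j := by
    intro p hp
    rcases mem_union.1 hp with h | h
    · exact hA p h
    · obtain ⟨q, hq, rfl⟩ := mem_image.1 h
      exact hA q hq
  have hambB : ∀ p ∈ (B ∪ B.image fun p => (p.1 - 1, p.2)), p.2 = j := by
    intro p hp
    rcases mem_union.1 hp with h | h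
    · exact hBj p h
    · obtain ⟨q, hq, rfl⟩ := mem_image.1 h
      exact hBj q hq
  have e1 : ((A ∪ A.image fun p => (p.1 - 1, p.2)).filter
      fun p => decide (p ∈ A ∪ B) ≠ decide ((p.1 + 1, p.2) ∈ A ∪ B)) =
      ((A ∪ A.image fun p => (p.1 - 1, p.2)).filter
      fun p => decide (p ∈ A) ≠ decide ((p.1 + 1, p.2) ∈ A)) := by
    apply filter_congr
    intro p hp
    simp only [Ne, decide_eq_decide]
    rw [hmemA p (hambA p hp), hmemA (p.1 + 1, p.2) (hambA p hp)]
  have e2 : ((B ∪ B.image fun p => (p.1 - 1, p.2)).filter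
      fun p => decide (p ∈ A ∪ B) ≠ decide ((p.1 + 1, p.2) ∈ A ∪ B)) =
      ((B ∪ B.image fun p => (p.1 - 1, p.2)).filter
      fun p => decide (p ∈ B) ≠ decide ((p.1 + 1, p.2) ∈ B)) := by
    apply filter_congr
    intro p hp
    simp only [Ne, decide_eq_decide]
    rw [hmemB p (hambB p hp), hmemB (p.1 + 1, p.2) (hambB p hp)]
  rw [e1, e2]
  apply card_union_of_disjoint
  rw [disjoint_left]
  intro p hp1 hp2
  exact hambA p (mem_of_mem_filter p hp1) (hambB p (mem_of_mem_filter p hp2))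

lemma Lh_boundary_subset (S : Finset ℤ) (j : ℤ) (T : Finset (ℤ×ℤ))
    (hT : ∀ x : ℤ, (x ∈ S ↔ ¬ (x + 1) ∈ S) → (x, j) ∈ T) :
    Lh (S ×ˢ ({j} : Finset ℤ)) ≤ T.card := by
  unfold Lh
  apply card_le_card
  intro p hp
  simp only [mem_filter] at hp
  obtain ⟨hamb, hcond⟩ := hp
  have hpj : p.2 = j := by
    rcases mem_union.1 hamb with h | h
    · exact mem_singleton.1 (mem_product.1 h).2
    · obtain ⟨q, hq, rfl⟩ := mem_image.1 h
      exact mem_singleton.1 (mem_product.1 hq).2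
  have hmem : ∀ y : ℤ, ((y, j) ∈ S ×ˢ ({j} : Finset ℤ)) ↔ y ∈ S := by
    intro y; simp [mem_product]
  rw [Ne, decide_eq_decide] at hcond
  have hp' : p = (p.1, j) := by rw [← hpj]
  rw [hp'] at hcond ⊢
  apply hT
  rw [hmem] at hcond
  have : ((p.1 + 1, j) ∈ S ×ˢ ({j} : Finset ℤ)) ↔ (p.1 + 1) ∈ S := hmem _
  tauto

lemma Lh_two_intervals (j a b a' b' : ℤ) :
    Lh ((Icc a b ∪ Icc a' b') ×ˢ ({j} : Finset ℤ)) ≤ 4 := by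
  refine le_trans (Lh_boundary_subset _ j {(a-1,j),(b,j),(a'-1,j),(b',j)} ?_) ?_
  · intro x hx
    simp only [mem_union, mem_Icc] at hx
    simp only [mem_insert, mem_singleton, Prod.mk.injEq, and_true]
    omega
  · apply le_trans (card_insert_le _ _)
    have h2 := card_insert_le (b,j) ({(a'-1,j),(b',j)} : Finset (ℤ×ℤ))
    have h3 := card_insert_le (a'-1,j) ({(b',j)} : Finset (ℤ×ℤ))
    simp only [card_singleton] at h3
    omega

lemma Lh_one_interval (j a b : ℤ) :
    Lh ((Icc a b) ×ˢ ({j} : Finset ℤ)) ≤ 2 := by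
  refine le_trans (Lh_boundary_subset _ j {(a-1,j),(b,j)} ?_) ?_
  · intro x hx
    simp only [mem_Icc] at hx
    simp only [mem_insert, mem_singleton, Prod.mk.injEq, and_true]
    omega
  · apply le_trans (card_insert_le _ _)
    simp

lemma lowerset_eq_Icc (M : ℤ) (S : Finset ℤ) (hS : S ⊆ Icc 1 M)
    (hlow : ∀ x ∈ S, ∀ y : ℤ, 1 ≤ y → y ≤ x → y ∈ S) :
    S = Icc 1 (S.card : ℤ) := by
  have hsub : Icc (1:ℤ) (S.card : ℤ) ⊆ S := by
    intro y hy
    rw [mem_Icc] at hy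
    by_contra hyS
    have hSsub : S ⊆ Icc 1 (y - 1) := by
      intro x hx
      have hx1 := mem_Icc.1 (hS hx)
      rw [mem_Icc]
      rcases le_or_gt y x with h | h
      · exact absurd (hlow x hx y hy.1 h) hyS
      · omega
    have := card_le_card hSsub
    rw [Int.card_Icc] at this
    omega
  have hcard : (Icc (1:ℤ) (S.card : ℤ)).card = S.card := by
    rw [Int.card_Icc]; omega
  exact (eq_of_subset_of_card_le hsub (by omega)).symm

lemma mem_colset {F : Finset (ℤ×ℤ)} {j x : ℤ} :
    x ∈ (F.filter fun p => p.2 = j).image Prod.fst ↔ (x, j) ∈ F := by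
  constructor
  · intro hx
    obtain ⟨p, hp, hpx⟩ := mem_image.1 hx
    rw [mem_filter] at hp
    rw [show (x, j) = p from (Prod.ext hpx hp.2).symm]
    exact hp.1
  · intro hx
    exact mem_image.2 ⟨(x, j), mem_filter.2 ⟨hx, rfl⟩, rfl⟩

lemma mem_rowset {F : Finset (ℤ×ℤ)} {i y : ℤ} :
    y ∈ (F.filter fun p => p.1 = i).image Prod.snd ↔ (i, y) ∈ F := by
  constructor
  · intro hy
    obtain ⟨p, hp, hpy⟩ := mem_image.1 hy
    rw [mem_filter] at hp
    rw [show (i, y) = p from (Prod.ext hp.2 hpy).symm]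
    exact hp.1
  · intro hy
    exact mem_image.2 ⟨(i, y), mem_filter.2 ⟨hy, rfl⟩, rfl⟩

lemma card_filter_swap {α : Type*} [DecidableEq α] (F : Finset α) (q : α → Prop)
    [DecidablePred q] (a b c d : α) (haF : a ∈ F) (hbF : b ∈ F) (hcF : c ∉ F)
    (hdF : d ∉ F) (hab : a ≠ b) (hcd : c ≠ d) (hca : q c ↔ q a) (hdb : q d ↔ q b) :
    ((insert c (insert d ((F.erase a).erase b))).filter q).card = (F.filter q).card := by
  classical
  have h1 : ((F.erase a).erase b).filter q = ((F.filter q).erase a).erase b := by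
    rw [filter_erase, filter_erase]
  rw [filter_insert, filter_insert, h1]
  have hcf : c ∉ ((F.filter q).erase a).erase b :=
    fun h => hcF (mem_of_mem_filter _ (mem_of_mem_erase (mem_of_mem_erase h)))
  have hdf : d ∉ ((F.filter q).erase a).erase b :=
    fun h => hdF (mem_of_mem_filter _ (mem_of_mem_erase (mem_of_mem_erase h)))
  by_cases hqa : q a <;> by_cases hqb : q b
  · -- both true
    rw [if_pos (hca.2 hqa), if_pos (hdb.2 hqb)]
    have haf : a ∈ F.filter q := mem_filter.2 ⟨haF, hqa⟩
    have hbf' : b ∈ F.filter q := mem_filter.2 ⟨hbF, hqb⟩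
    have hbe : b ∈ (F.filter q).erase a := mem_erase.2 ⟨fun h => hab h.symm, hbf'⟩
    have hc2 : c ∉ insert d (((F.filter q).erase a).erase b) := by
      intro h
      rcases mem_insert.1 h with h | h
      · exact hcd h
      · exact hcf h
    rw [card_insert_of_notMem hc2, card_insert_of_notMem hdf,
      card_erase_of_mem hbe, card_erase_of_mem haf]
    have h5 := card_pos.2 ⟨a, haf⟩
    have h7 := card_pos.2 ⟨b, hbe⟩
    have h6 := card_erase_of_mem haf
    omega
  · rw [if_pos (hca.2 hqa), if_neg (fun h => hqb (hdb.1 h))]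
    have haf : a ∈ F.filter q := mem_filter.2 ⟨haF, hqa⟩
    have hbf : b ∉ (F.filter q).erase a := fun h => hqb (mem_filter.1 (mem_of_mem_erase h)).2
    rw [erase_eq_of_notMem hbf, card_insert_of_notMem (fun h => hcf (by
      rw [erase_eq_of_notMem hbf]; exact h)), card_erase_of_mem haf]
    have := card_pos.2 ⟨a, haf⟩
    omega
  · rw [if_neg (fun h => hqa (hca.1 h)), if_pos (hdb.2 hqb)]
    have hbf' : b ∈ F.filter q := mem_filter.2 ⟨hbF, hqb⟩
    have haf : a ∉ F.filter q := fun h => hqa (mem_filter.1 h).2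
    rw [erase_eq_of_notMem haf] at hdf ⊢
    rw [card_insert_of_notMem hdf, card_erase_of_mem hbf']
    have := card_pos.2 ⟨b, hbf'⟩
    omega
  · rw [if_neg (fun h => hqa (hca.1 h)), if_neg (fun h => hqb (hdb.1 h))]
    have haf : a ∉ F.filter q := fun h => hqa (mem_filter.1 h).2
    have hbf : b ∉ (F.filter q).erase a := fun h => hqb (mem_filter.1 (mem_of_mem_erase h)).2
    rw [erase_eq_of_notMem haf, erase_eq_of_notMem (by rwa [erase_eq_of_notMem haf] at hbf)]

lemma exchange (m n j₀ : ℤ) (hj : j₀ ≤ n) (S : Finset ℤ) (hSm : S ⊆ Icc 1 m) :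
    ∀ d : ℕ, ∀ F : Finset (ℤ×ℤ),
    F ⊆ Icc 1 m ×ˢ Icc j₀ n →
    S.card = colSum F j₀ →
    (∀ i ∈ S, ∀ i' ∈ Icc (1:ℤ) m, i' ∉ S → rowSum F i' ≤ rowSum F i) →
    (S \ ((F.filter fun p => p.2 = j₀).image Prod.fst)).card ≤ d →
    ∃ F' : Finset (ℤ×ℤ), F' ⊆ Icc 1 m ×ˢ Icc j₀ n ∧
      (∀ i, rowSum F' i = rowSum F i) ∧ (∀ j, colSum F' j = colSum F j) ∧
      (F'.filter fun p => p.2 = j₀) = S ×ˢ ({j₀} : Finset ℤ) := by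
  intro d
  induction d with
  | zero =>
    intro F hbox hcard htop hd
    have hScs : S = (F.filter fun p => p.2 = j₀).image Prod.fst := by
      have hsub : S ⊆ (F.filter fun p => p.2 = j₀).image Prod.fst := by
        intro x hx
        by_contra hx'
        have h1 : x ∈ S \ ((F.filter fun p => p.2 = j₀).image Prod.fst) :=
          mem_sdiff.2 ⟨hx, hx'⟩
        have := card_pos.2 ⟨x, h1⟩
        omega
      apply eq_of_subset_of_card_le hsub
      rw [card_column]; omega
    refine ⟨F, hbox, fun _ => rfl, fun _ => rfl, ?_⟩
    ext ⟨x, y⟩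
    simp only [mem_filter, mem_product, mem_singleton]
    constructor
    · rintro ⟨hF, hy⟩
      refine ⟨?_, hy⟩
      rw [hScs]
      rw [hy] at hF
      exact mem_colset.2 hF
    · rintro ⟨hx, hy⟩
      rw [hScs] at hx
      rw [hy]
      exact ⟨mem_colset.1 hx, rfl⟩
  | succ d ih =>
    intro F hbox hcard htop hd
    by_cases hempty : (S \ ((F.filter fun p => p.2 = j₀).image Prod.fst)).card = 0
    · exact ih F hbox hcard htop (by omega)
    obtain ⟨i, hi⟩ := card_pos.1 (Nat.pos_of_ne_zero hempty)
    rw [mem_sdiff] at hi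
    obtain ⟨hiS, hics⟩ := hi
    have hcs_card : ((F.filter fun p => p.2 = j₀).image Prod.fst).card = S.card := by
      rw [card_column]; omega
    have hex : ∃ i', i' ∈ (F.filter fun p => p.2 = j₀).image Prod.fst ∧ i' ∉ S := by
      by_contra h
      push_neg at h
      have : (F.filter fun p => p.2 = j₀).image Prod.fst = S :=
        eq_of_subset_of_card_le h (by omega)
      rw [← this] at hiS
      exact hics hiS
    obtain ⟨i', hi'cs, hi'S⟩ := hex
    have hii' : i ≠ i' := fun h => hi'S (h ▸ hiS)
    have hi'F : (i', j₀) ∈ F := mem_colset.1 hi'cs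
    have hiF : (i, j₀) ∉ F := fun h => hics (mem_colset.2 h)
    have him : i ∈ Icc (1:ℤ) m := hSm hiS
    have hi'm : i' ∈ Icc (1:ℤ) m := (mem_product.1 (hbox hi'F)).1
    have htop' : rowSum F i' ≤ rowSum F i := htop i hiS i' hi'm hi'S
    have hexj : ∃ jc : ℤ, (i, jc) ∈ F ∧ (i', jc) ∉ F ∧ jc ≠ j₀ := by
      by_contra h
      push_neg at h
      have hsub : (F.filter fun p => p.1 = i).image Prod.snd ⊆
          ((F.filter fun p => p.1 = i').image Prod.snd).erase j₀ := by
        intro z hz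
        have hzF : (i, z) ∈ F := mem_rowset.1 hz
        have hzj : z ≠ j₀ := fun hzj => hiF (hzj ▸ hzF)
        have : (i', z) ∈ F := by
          by_contra hcon
          exact hzj (h z hzF hcon)
        exact mem_erase.2 ⟨hzj, mem_rowset.2 this⟩
      have h1 := card_le_card hsub
      have h2 : j₀ ∈ (F.filter fun p => p.1 = i').image Prod.snd := mem_rowset.2 hi'F
      have h3 := card_erase_of_mem h2
      have h4 := card_pos.2 ⟨j₀, h2⟩
      rw [card_row] at h1 h4
      rw [card_row] at h3
      omega
    obtain ⟨jc, hjcF, hjcF', hjcj₀⟩ := hexj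
    set F' := insert ((i : ℤ), j₀) (insert ((i' : ℤ), jc)
      ((F.erase (i', j₀)).erase (i, jc))) with hF'
    have hmem : ∀ p : ℤ×ℤ, p ∈ F' ↔
        p = (i, j₀) ∨ p = (i', jc) ∨ (p ∈ F ∧ p ≠ (i', j₀) ∧ p ≠ (i, jc)) := by
      intro p
      simp only [hF', mem_insert, mem_erase]
      tauto
    have hbox' : F' ⊆ Icc 1 m ×ˢ Icc j₀ n := by
      intro p hp
      rcases (hmem p).1 hp with h | h | ⟨h, _, _⟩
      · rw [h, mem_product]
        exact ⟨him, mem_Icc.2 ⟨le_refl _, hj⟩⟩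
      · rw [h, mem_product]
        exact ⟨hi'm, (mem_product.1 (hbox hjcF)).2⟩
      · exact hbox h
    have herase : (F.erase ((i':ℤ), j₀)).erase (i, jc) =
        (F.erase ((i:ℤ), jc)).erase (i', j₀) := Finset.erase_right_comm
    have hij2 : ((i:ℤ), j₀) ≠ (i', jc) := by
      intro h
      exact hii' (congrArg Prod.fst h)
    have hij3 : ((i:ℤ), jc) ≠ (i', j₀) := by
      intro h
      exact hii' (congrArg Prod.fst h)
    have hij4 : ((i':ℤ), j₀) ≠ (i, jc) := fun h => hij3 h.symm
    have hrow : ∀ x, rowSum F' x = rowSum F x := by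
      intro x
      rw [rowSum, rowSum, hF', herase]
      exact card_filter_swap F (fun p => p.1 = x) ((i:ℤ), jc) ((i':ℤ), j₀)
        ((i:ℤ), j₀) ((i':ℤ), jc) hjcF hi'F hiF hjcF' hij3 hij2 Iff.rfl Iff.rfl
    have hcol : ∀ y, colSum F' y = colSum F y := by
      intro y
      rw [colSum, colSum, hF']
      exact card_filter_swap F (fun p => p.2 = y) ((i':ℤ), j₀) ((i:ℤ), jc)
        ((i:ℤ), j₀) ((i':ℤ), jc) hi'F hjcF hiF hjcF' hij4 hij2 Iff.rfl Iff.rfl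
    have hics' : i ∈ (F'.filter fun p => p.2 = j₀).image Prod.fst :=
      mem_colset.2 ((hmem (i, j₀)).2 (Or.inl rfl))
    have hsub2 : S \ ((F'.filter fun p => p.2 = j₀).image Prod.fst) ⊆
        (S \ ((F.filter fun p => p.2 = j₀).image Prod.fst)).erase i := by
      intro x hx
      rw [mem_sdiff] at hx
      obtain ⟨hxS, hxcs'⟩ := hx
      have hxi : x ≠ i := fun h => hxcs' (h ▸ hics')
      refine mem_erase.2 ⟨hxi, mem_sdiff.2 ⟨hxS, ?_⟩⟩
      intro hxcs
      apply hxcs'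
      have hxF : (x, j₀) ∈ F := mem_colset.1 hxcs
      have hxi' : x ≠ i' := fun h => hi'S (h ▸ hxS)
      apply mem_colset.2
      apply (hmem (x, j₀)).2
      refine Or.inr (Or.inr ⟨hxF, ?_, ?_⟩)
      · intro hcon
        exact hxi' (congrArg Prod.fst hcon)
      · intro hcon
        exact hjcj₀ (congrArg Prod.snd hcon).symm
    have hmeas : (S \ ((F'.filter fun p => p.2 = j₀).image Prod.fst)).card ≤ d := by
      have h1 := card_le_card hsub2
      have h2 : i ∈ S \ ((F.filter fun p => p.2 = j₀).image Prod.fst) :=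
        mem_sdiff.2 ⟨hiS, hics⟩
      have h3 := card_erase_of_mem h2
      have h4 := card_pos.2 ⟨i, h2⟩
      omega
    obtain ⟨F'', hbox'', hrow'', hcol'', hfin''⟩ :=
      ih F' hbox' (by rw [hcol]; exact hcard)
        (fun a ha b hb hbS => by rw [hrow, hrow]; exact htop a ha b hb hbS) hmeas
    exact ⟨F'', hbox'', fun x => (hrow'' x).trans (hrow x),
      fun y => (hcol'' y).trans (hcol y), hfin''⟩

lemma rec_lemma (m n : ℤ) (hm : 1 ≤ m) :
    ∀ k : ℕ, ∀ j₀ : ℤ, ∀ F : Finset (ℤ×ℤ),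
    j₀ + k = n → F ⊆ Icc 1 m ×ˢ Icc j₀ n →
    (∀ x x' : ℤ, 1 ≤ x → x ≤ x' → x' ≤ m → rowSum F x' ≤ rowSum F x) →
    ∃ G : Finset (ℤ×ℤ), G ⊆ Icc 1 m ×ˢ Icc j₀ n ∧
      (∀ x, rowSum G x = rowSum F x) ∧ (∀ y, colSum G y = colSum F y) ∧
      Lh G ≤ 4 * k + 2 := by
  intro k
  induction k with
  | zero =>
    intro j₀ F hk hbox hmono
    have hj₀ : j₀ = n := by push_cast at hk; omega
    subst hj₀
    set S := F.image Prod.fst with hSdef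
    have hFS : F = S ×ˢ ({j₀} : Finset ℤ) := by
      ext ⟨x, y⟩
      simp only [mem_product, mem_singleton]
      constructor
      · intro h
        have hb := mem_product.1 (hbox h)
        simp only [mem_Icc] at hb
        have hy : y = j₀ := by omega
        exact ⟨mem_image.2 ⟨(x, y), h, rfl⟩, hy⟩
      · rintro ⟨hx, hy⟩
        obtain ⟨p, hp, hpx⟩ := mem_image.1 hx
        have hb := mem_product.1 (hbox hp)
        simp only [mem_Icc] at hb
        have : p = (x, y) := Prod.ext hpx (by omega)
        rwa [← this]
    have hind : ∀ x ∈ S, rowSum F x = 1 := by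
      intro x hx
      obtain ⟨p, hp, hpx⟩ := mem_image.1 hx
      have hb := mem_product.1 (hbox hp)
      simp only [mem_Icc] at hb
      have hpeq : p = (x, j₀) := Prod.ext hpx (by omega)
      rw [hpeq] at hp
      have hsub : F.filter (fun p => p.1 = x) ⊆ {(x, j₀)} := by
        intro q hq
        rw [mem_filter] at hq
        have hqb := mem_product.1 (hbox hq.1)
        simp only [mem_Icc] at hqb
        rw [mem_singleton]
        exact Prod.ext hq.2 (by omega)
      have h1 := card_le_card hsub
      rw [card_singleton] at h1
      have h2 : (x, j₀) ∈ F.filter (fun p => p.1 = x) := mem_filter.2 ⟨hp, rfl⟩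
      have h3 := card_pos.2 ⟨_, h2⟩
      rw [rowSum]
      omega
    have hSm : S ⊆ Icc 1 m := by
      intro x hx
      obtain ⟨p, hp, hpx⟩ := mem_image.1 hx
      exact hpx ▸ (mem_product.1 (hbox hp)).1
    have hlow : ∀ x ∈ S, ∀ y : ℤ, 1 ≤ y → y ≤ x → y ∈ S := by
      intro x hx y h1 h2
      have hxm := mem_Icc.1 (hSm hx)
      have : 1 ≤ rowSum F y := by
        have := hmono y x h1 h2 hxm.2
        rw [hind x hx] at this
        exact this
      rw [rowSum] at this
      obtain ⟨p, hp⟩ := card_pos.1 this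
      rw [mem_filter] at hp
      exact mem_image.2 ⟨p, hp.1, hp.2⟩
    have hSIcc := lowerset_eq_Icc m S hSm hlow
    refine ⟨F, hbox, fun _ => rfl, fun _ => rfl, ?_⟩
    obtain ⟨t, ht⟩ : ∃ t : ℤ, S = Icc 1 t := ⟨_, hSIcc⟩
    rw [hFS, ht]
    exact (Lh_one_interval _ _ _).trans (by omega)
  | succ k ih =>
    intro j₀ F hk hbox hmono
    have hj₀n : j₀ < n := by push_cast at hk; omega
    by_cases hc0 : colSum F j₀ = 0
    · have hbox' : F ⊆ Icc 1 m ×ˢ Icc (j₀ + 1) n := by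
        intro p hp
        have hb := mem_product.1 (hbox hp)
        simp only [mem_product, mem_Icc]
        simp only [mem_Icc] at hb
        refine ⟨hb.1, ?_, hb.2.2⟩
        have hne : p.2 ≠ j₀ := by
          intro h
          have : p ∈ F.filter (fun q => q.2 = j₀) := mem_filter.2 ⟨hp, h⟩
          have := card_pos.2 ⟨p, this⟩
          rw [colSum] at hc0
          omega
        omega
      obtain ⟨G, hGbox, hGrow, hGcol, hGLh⟩ :=
        ih (j₀ + 1) F (by push_cast; push_cast at hk; omega) hbox' hmono
      refine ⟨G, ?_, hGrow, hGcol, by omega⟩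
      refine hGbox.trans ?_
      apply product_subset_product (Subset.refl _)
      apply Icc_subset_Icc (by omega) (le_refl _)
    · -- main case
      set c := colSum F j₀ with hcdef
      have hc1 : 1 ≤ c := Nat.pos_of_ne_zero hc0
      have hcm : (c : ℤ) ≤ m := by
        have h1 : ((F.filter fun p => p.2 = j₀).image Prod.fst) ⊆ Icc 1 m := by
          intro x hx
          exact (mem_product.1 (hbox (mem_colset.1 hx))).1
        have h2 := card_le_card h1
        rw [card_column] at h2
        rw [Int.card_Icc] at h2
        omega
      set ρ := rowSum F with hρdef
      set v := ρ (c : ℤ) with hvdef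
      -- support
      have hv1 : 1 ≤ v := by
        set P1 := (Icc (1:ℤ) m).filter (fun i => 1 ≤ ρ i) with hP1
        have hP1sub : P1 ⊆ Icc 1 m := filter_subset _ _
        have hP1low : ∀ x ∈ P1, ∀ y : ℤ, 1 ≤ y → y ≤ x → y ∈ P1 := by
          intro x hx y h1 h2
          rw [hP1, mem_filter] at hx ⊢
          simp only [mem_Icc] at hx ⊢
          have := hmono y x h1 h2 hx.1.2
          refine ⟨⟨h1, by omega⟩, by omega⟩
        have hP1Icc := lowerset_eq_Icc m P1 hP1sub hP1low
        have hcsub : ((F.filter fun p => p.2 = j₀).image Prod.fst) ⊆ P1 := by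
          intro x hx
          have hxF := mem_colset.1 hx
          rw [hP1, mem_filter]
          refine ⟨(mem_product.1 (hbox hxF)).1, ?_⟩
          have : (x, j₀) ∈ F.filter (fun p => p.1 = x) := mem_filter.2 ⟨hxF, rfl⟩
          have := card_pos.2 ⟨_, this⟩
          rw [hρdef, rowSum]
          omega
        have hcle := card_le_card hcsub
        rw [card_column] at hcle
        have hcP1 : (c:ℤ) ∈ P1 := by
          rw [hP1Icc, mem_Icc]
          constructor
          · omega
          · exact_mod_cast Nat.cast_le.2 hcle
        rw [hP1, mem_filter] at hcP1
        exact hcP1.2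
      -- the sets Ppos and Pe
      set Ppos := (Icc (1:ℤ) m).filter (fun i => v < ρ i) with hPpos
      set Pe := (Icc (1:ℤ) m).filter (fun i => v ≤ ρ i) with hPe
      set pos := Ppos.card with hposdef
      set e := Pe.card with hedef
      have hPposlow : ∀ x ∈ Ppos, ∀ y : ℤ, 1 ≤ y → y ≤ x → y ∈ Ppos := by
        intro x hx y h1 h2
        rw [hPpos, mem_filter, mem_Icc] at hx ⊢
        have := hmono y x h1 h2 hx.1.2
        exact ⟨⟨h1, by omega⟩, by omega⟩
      have hPposIcc : Ppos = Icc 1 (pos : ℤ) :=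
        lowerset_eq_Icc m Ppos (by rw [hPpos]; exact filter_subset _ _) hPposlow
      have hPelow : ∀ x ∈ Pe, ∀ y : ℤ, 1 ≤ y → y ≤ x → y ∈ Pe := by
        intro x hx y h1 h2
        rw [hPe, mem_filter, mem_Icc] at hx ⊢
        have := hmono y x h1 h2 hx.1.2
        exact ⟨⟨h1, by omega⟩, by omega⟩
      have hPeIcc : Pe = Icc 1 (e : ℤ) :=
        lowerset_eq_Icc m Pe (by rw [hPe]; exact filter_subset _ _) hPelow
      have hposc : (pos : ℤ) < c := by
        by_contra h
        push_neg at h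
        have : (c:ℤ) ∈ Icc (1:ℤ) pos := mem_Icc.2 ⟨by omega, h⟩
        rw [← hPposIcc, hPpos, mem_filter] at this
        exact absurd this.2 (lt_irrefl _)
      have hce : (c : ℤ) ≤ e := by
        have : (c:ℤ) ∈ Pe := by
          rw [hPe, mem_filter, mem_Icc]
          exact ⟨⟨by omega, hcm⟩, le_refl _⟩
        rw [hPeIcc, mem_Icc] at this
        exact this.2
      have hem : (e : ℤ) ≤ m := by
        rcases Nat.eq_zero_or_pos e with h | h
        · omega
        · have : (e:ℤ) ∈ Pe := by
            rw [hPeIcc, mem_Icc]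
            constructor
            · exact_mod_cast h
            · exact le_refl _
          rw [hPe, mem_filter, mem_Icc] at this
          exact this.1.2
      set lo := (e : ℤ) - ((c : ℤ) - pos) + 1 with hlodef
      have hlopos : (pos : ℤ) + 1 ≤ lo := by omega
      set S := Icc (1:ℤ) (pos : ℤ) ∪ Icc lo (e : ℤ) with hSdef
      have hSsub : S ⊆ Icc 1 m := by
        rw [hSdef]
        apply union_subset
        · exact Icc_subset_Icc (le_refl _) (by omega)
        · exact Icc_subset_Icc (by omega) hem
      have hdisjS : Disjoint (Icc (1:ℤ) (pos : ℤ)) (Icc lo (e : ℤ)) := by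
        rw [disjoint_left]
        intro x hx hx'
        simp only [mem_Icc] at hx hx'
        omega
      have hcardS : S.card = c := by
        rw [hSdef, card_union_of_disjoint hdisjS, Int.card_Icc, Int.card_Icc]
        omega
      have hSv : ∀ x ∈ S, v ≤ ρ x := by
        intro x hx
        rw [hSdef, mem_union] at hx
        rcases hx with hx | hx
        · have : x ∈ Ppos := by rw [hPposIcc]; exact hx
          rw [hPpos, mem_filter] at this
          omega
        · have : x ∈ Pe := by
            rw [hPeIcc, mem_Icc]
            simp only [mem_Icc] at hx
            omega
          rw [hPe, mem_filter] at this
          exact this.2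
      have hSv' : ∀ x ∈ Icc (1:ℤ) m, x ∉ S → ρ x ≤ v := by
        intro x hx hxS
        have hxpos : x ∉ Ppos := by
          rw [hPposIcc]
          intro hcon
          apply hxS
          rw [hSdef, mem_union]
          exact Or.inl hcon
        rw [hPpos, mem_filter] at hxpos
        push_neg at hxpos
        exact hxpos hx
      -- apply exchange
      have harg1 : S.card = colSum F j₀ := by rw [hcardS]
      have harg2 : ∀ a ∈ S, ∀ b ∈ Icc (1:ℤ) m, b ∉ S → rowSum F b ≤ rowSum F a :=
        fun a ha b hb hbS => le_trans (hSv' b hb hbS) (hSv a ha)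
      obtain ⟨F', hbox', hrow', hcol', hfin'⟩ :=
        exchange m n j₀ (by omega) S hSsub S.card F hbox
          harg1 harg2 (card_le_card sdiff_subset)
      set F'' := F'.filter (fun p => ¬ p.2 = j₀) with hF''def
      have hbox'' : F'' ⊆ Icc 1 m ×ˢ Icc (j₀ + 1) n := by
        intro p hp
        rw [hF''def, mem_filter] at hp
        have hb := mem_product.1 (hbox' hp.1)
        simp only [mem_product, mem_Icc]
        simp only [mem_Icc] at hb
        have := hp.2
        refine ⟨hb.1, by omega, hb.2.2⟩
      have hsplit : F'' ∪ S ×ˢ ({j₀} : Finset ℤ) = F' := by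
        rw [hF''def, ← hfin', union_comm]
        exact filter_union_filter_not_eq _ F'
      have hdisj'' : Disjoint F'' (S ×ˢ ({j₀} : Finset ℤ)) := by
        rw [disjoint_left]
        intro p hp hp'
        rw [hF''def, mem_filter] at hp
        rw [mem_product, mem_singleton] at hp'
        exact hp.2 hp'.2
      have hρ'' : ∀ x, rowSum F'' x + (if x ∈ S then 1 else 0) = ρ x := by
        intro x
        rw [hρdef, ← hrow' x, ← hsplit, rowSum_union _ _ hdisj'', rowSum_prod]
      have hmono'' : ∀ x x' : ℤ, 1 ≤ x → x ≤ x' → x' ≤ m →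
          rowSum F'' x' ≤ rowSum F'' x := by
        intro x x' h1 h2 h3
        have ex := hρ'' x
        have ex' := hρ'' x'
        have hmxx := hmono x x' h1 h2 h3
        by_cases hxS : x ∈ S
        · by_cases hx'S : x' ∈ S
          · rw [if_pos hxS] at ex
            rw [if_pos hx'S] at ex'
            omega
          · -- need ρ x' < ρ x
            have hstrict : ρ x' < ρ x := by
              rw [hSdef, mem_union] at hxS
              rcases hxS with hx0 | hx0
              · have h4 := hSv' x' (mem_Icc.2 ⟨by omega, h3⟩) hx'S
                have h5 : x ∈ Ppos := by rw [hPposIcc]; exact hx0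
                rw [hPpos, mem_filter] at h5
                omega
              · simp only [mem_Icc] at hx0
                have hx'e : (e:ℤ) < x' := by
                  by_contra hcon
                  push_neg at hcon
                  apply hx'S
                  rw [hSdef, mem_union]
                  right
                  rw [mem_Icc]
                  omega
                have hx'Pe : x' ∉ Pe := by
                  rw [hPeIcc, mem_Icc]
                  omega
                rw [hPe, mem_filter] at hx'Pe
                push_neg at hx'Pe
                have h6 := hx'Pe (mem_Icc.2 ⟨by omega, h3⟩)
                have h7 := hSv x (by rw [hSdef, mem_union]; right; rw [mem_Icc]; omega)
                omega
            rw [if_pos hxS] at ex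
            rw [if_neg hx'S] at ex'
            omega
        · rw [if_neg hxS] at ex
          by_cases hx'S : x' ∈ S
          · rw [if_pos hx'S] at ex'
            omega
          · rw [if_neg hx'S] at ex'
            omega
      obtain ⟨G'', hGbox'', hGrow'', hGcol'', hGLh''⟩ :=
        ih (j₀ + 1) F'' (by push_cast; push_cast at hk; omega) hbox'' hmono''
      refine ⟨G'' ∪ S ×ˢ ({j₀} : Finset ℤ), ?_, ?_, ?_, ?_⟩
      · apply union_subset
        · refine hGbox''.trans ?_
          apply product_subset_product (Subset.refl _)
          exact Icc_subset_Icc (by omega) (le_refl _)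
        · rw [hSdef]
          apply product_subset_product hSsub
          intro z hz
          rw [mem_singleton] at hz
          rw [hz, mem_Icc]
          omega
      · intro x
        have hd : Disjoint G'' (S ×ˢ ({j₀} : Finset ℤ)) := by
          rw [disjoint_left]
          intro p hp hp'
          have hb := mem_product.1 (hGbox'' hp)
          simp only [mem_Icc] at hb
          rw [mem_product, mem_singleton] at hp'
          omega
        rw [rowSum_union _ _ hd, rowSum_prod, hGrow'' x]
        have := hρ'' x
        omega
      · intro y
        have hd : Disjoint G'' (S ×ˢ ({j₀} : Finset ℤ)) := by
          rw [disjoint_left]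
          intro p hp hp'
          have hb := mem_product.1 (hGbox'' hp)
          simp only [mem_Icc] at hb
          rw [mem_product, mem_singleton] at hp'
          omega
        rw [colSum_union _ _ hd, hGcol'' y, ← hcol' y, ← hsplit,
          colSum_union _ _ hdisj'']
      · have hA : ∀ p ∈ G'', p.2 ≠ j₀ := by
          intro p hp
          have hb := mem_product.1 (hGbox'' hp)
          simp only [mem_Icc] at hb
          omega
        rw [Lh_union_column G'' S j₀ hA]
        have h4 := Lh_two_intervals j₀ 1 (pos:ℤ) lo (e:ℤ)
        rw [← hSdef] at h4
        omega

/-- For consistent monotone line sums with `n = r 1 ≥ 2` and `m = c 1`, there exists a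
set `F₂` with these line sums whose horizontal boundary has length at most `4n - 4`. -/
theorem exists_small_horizontal_boundary (m n : ℕ) (r c : ℕ → ℕ)
    (hm : 1 ≤ m) (hn : 2 ≤ n)
    (hr : ∀ i i' : ℕ, 1 ≤ i → i ≤ i' → i' ≤ m → r i' ≤ r i)
    (hc : ∀ j j' : ℕ, 1 ≤ j → j ≤ j' → j' ≤ n → c j' ≤ c j)
    (hr1 : r 1 = n) (hc1 : c 1 = m)
    (hcons : ∃ F : Finset (ℤ × ℤ),
      F ⊆ Finset.Icc 1 (m : ℤ) ×ˢ Finset.Icc 1 (n : ℤ) ∧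
      (∀ i ∈ Finset.Icc 1 m, rowSum F i = r i) ∧
      (∀ j ∈ Finset.Icc 1 n, colSum F j = c j)) :
    ∃ F2 : Finset (ℤ × ℤ),
      F2 ⊆ Finset.Icc 1 (m : ℤ) ×ˢ Finset.Icc 1 (n : ℤ) ∧
      (∀ i ∈ Finset.Icc 1 m, rowSum F2 i = r i) ∧
      (∀ j ∈ Finset.Icc 1 n, colSum F2 j = c j) ∧
      Lh F2 ≤ 4 * n - 4 := by
  obtain ⟨F, hbox, hrow, hcol⟩ := hcons
  have hrowF : ∀ x : ℤ, x ∈ Icc (1:ℤ) m → rowSum F x = r x.toNat := by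
    intro x hx
    simp only [mem_Icc] at hx
    have h1 : x.toNat ∈ Finset.Icc 1 m := by
      rw [Finset.mem_Icc]; omega
    have h2 := hrow x.toNat h1
    rwa [show ((x.toNat : ℤ)) = x by omega] at h2
  -- column 1 is full
  have hcol1 : colSum F 1 = m := by
    have h1 : (1 : ℕ) ∈ Finset.Icc 1 n := by rw [Finset.mem_Icc]; omega
    have := hcol 1 h1
    rwa [hc1, Nat.cast_one] at this
  have hfull : ∀ x : ℤ, x ∈ Icc (1:ℤ) m → (x, 1) ∈ F := by
    have hsub : ((F.filter fun p => p.2 = 1).image Prod.fst) ⊆ Icc (1:ℤ) m := by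
      intro x hx
      exact (mem_product.1 (hbox (mem_colset.1 hx))).1
    have hcard : (Icc (1:ℤ) m).card ≤ ((F.filter fun p => p.2 = 1).image Prod.fst).card := by
      rw [card_column, hcol1, Int.card_Icc]
      omega
    have heq := eq_of_subset_of_card_le hsub hcard
    intro x hx
    rw [← heq] at hx
    exact mem_colset.1 hx
  -- the column-1 part of F
  have hcol1set : (F.filter fun p => p.2 = 1) = (Icc (1:ℤ) m) ×ˢ ({1} : Finset ℤ) := by
    ext ⟨x, y⟩
    simp only [mem_filter, mem_product, mem_singleton]
    constructor
    · rintro ⟨hF, hy⟩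
      refine ⟨?_, hy⟩
      have := (mem_product.1 (hbox hF)).1
      exact this
    · rintro ⟨hx, hy⟩
      subst hy
      exact ⟨hfull x hx, rfl⟩
  set F' := F.filter (fun p => ¬ p.2 = 1) with hF'def
  have hsplit : F' ∪ (Icc (1:ℤ) m) ×ˢ ({1} : Finset ℤ) = F := by
    rw [hF'def, ← hcol1set, union_comm]
    exact filter_union_filter_not_eq _ F
  have hdisj : Disjoint F' ((Icc (1:ℤ) m) ×ˢ ({1} : Finset ℤ)) := by
    rw [disjoint_left]
    intro p hp hp'
    rw [hF'def, mem_filter] at hp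
    rw [mem_product, mem_singleton] at hp'
    exact hp.2 hp'.2
  have hrowF' : ∀ x : ℤ, rowSum F' x + (if x ∈ Icc (1:ℤ) m then 1 else 0) = rowSum F x := by
    intro x
    rw [← hsplit, rowSum_union _ _ hdisj, rowSum_prod]
  have hcolF' : ∀ y : ℤ, colSum F' y + (if y = 1 then (Icc (1:ℤ) m).card else 0) = colSum F y := by
    intro y
    rw [← hsplit, colSum_union _ _ hdisj, colSum_prod]
  have hbox' : F' ⊆ Icc (1:ℤ) m ×ˢ Icc 2 (n:ℤ) := by
    intro p hp
    rw [hF'def, mem_filter] at hp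
    have hb := mem_product.1 (hbox hp.1)
    simp only [mem_product, mem_Icc] at hb ⊢
    have := hp.2
    exact ⟨hb.1, by omega, hb.2.2⟩
  have hmono' : ∀ x x' : ℤ, 1 ≤ x → x ≤ x' → x' ≤ m →
      rowSum F' x' ≤ rowSum F' x := by
    intro x x' h1 h2 h3
    have e1 := hrowF' x
    have e2 := hrowF' x'
    have hx : x ∈ Icc (1:ℤ) m := mem_Icc.2 ⟨h1, by omega⟩
    have hx' : x' ∈ Icc (1:ℤ) m := mem_Icc.2 ⟨by omega, h3⟩
    rw [if_pos hx] at e1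
    rw [if_pos hx'] at e2
    have r1 := hrowF x hx
    have r2 := hrowF x' hx'
    have hmono0 : r x'.toNat ≤ r x.toNat := hr x.toNat x'.toNat (by omega) (by omega) (by omega)
    omega
  obtain ⟨G, hGbox, hGrow, hGcol, hGLh⟩ :=
    rec_lemma m n (by exact_mod_cast hm) (n - 2) 2 F' (by push_cast; omega) hbox' hmono'
  refine ⟨G ∪ (Icc (1:ℤ) m) ×ˢ ({1} : Finset ℤ), ?_, ?_, ?_, ?_⟩
  · apply union_subset
    · refine hGbox.trans ?_
      apply product_subset_product (Subset.refl _)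
      apply Icc_subset_Icc (by omega) (le_refl _)
    · apply product_subset_product (Subset.refl _)
      intro z hz
      rw [mem_singleton] at hz
      rw [hz, mem_Icc]
      constructor
      · omega
      · exact_mod_cast (by omega : (1:ℕ) ≤ n)
  · intro i hi
    simp only [Finset.mem_Icc] at hi
    have hiZ : (i:ℤ) ∈ Icc (1:ℤ) m := by rw [mem_Icc]; push_cast; omega
    have hd : Disjoint G ((Icc (1:ℤ) m) ×ˢ ({1} : Finset ℤ)) := by
      rw [disjoint_left]
      intro p hp hp'
      have hb := mem_product.1 (hGbox hp)
      simp only [mem_Icc] at hb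
      rw [mem_product, mem_singleton] at hp'
      omega
    rw [rowSum_union _ _ hd, rowSum_prod, if_pos hiZ, hGrow]
    have e1 := hrowF' (i:ℤ)
    rw [if_pos hiZ] at e1
    have r1 := hrowF (i:ℤ) hiZ
    rw [show ((i:ℤ)).toNat = i by omega] at r1
    omega
  · intro j hj
    simp only [Finset.mem_Icc] at hj
    have hd : Disjoint G ((Icc (1:ℤ) m) ×ˢ ({1} : Finset ℤ)) := by
      rw [disjoint_left]
      intro p hp hp'
      have hb := mem_product.1 (hGbox hp)
      simp only [mem_Icc] at hb
      rw [mem_product, mem_singleton] at hp'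
      omega
    rw [colSum_union _ _ hd, colSum_prod, hGcol]
    have e1 := hcolF' (j:ℤ)
    by_cases hj1 : j = 1
    · subst hj1
      simp only [Nat.cast_one, if_pos] at e1 ⊢
      have hG1 : colSum F' 1 = 0 := by
        rw [colSum]
        rw [Finset.card_eq_zero]
        ext p
        simp only [mem_filter, notMem_empty, iff_false, not_and]
        intro hp
        rw [hF'def, mem_filter] at hp
        exact hp.2
      rw [hG1, Int.card_Icc, hc1]
      omega
    · have hjne : ((j:ℤ)) ≠ 1 := by
        intro hcon
        exact hj1 (by exact_mod_cast hcon)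
      rw [if_neg hjne] at e1 ⊢
      have := hcol j (by rw [Finset.mem_Icc]; omega)
      omega
  · have hA : ∀ p ∈ G, p.2 ≠ 1 := by
      intro p hp
      have hb := mem_product.1 (hGbox hp)
      simp only [mem_Icc] at hb
      omega
    rw [Lh_union_column G _ 1 hA]
    have h2 := Lh_one_interval 1 1 (m:ℤ)
    omega
end

section
/- Let F ⊆ Z² be finite with row sums r_i supported on rows 1..m and column sums c_j supported on columns 1..n, where r_1 ≥ ... ≥ r_m. Define F' = F ∪ {(0,j) : 0 ≤ j ≤ n} ∪ {(i,0) : 1 ≤ i ≤ m}. Then L_h(F') = L_h(F) + 2(n + 1 − r_1) and L_v(F') = L_v(F) + 2(m + 1 − c_1), provided row 1 of F is contained in columns 1..n and column 1 of F in rows 1..m. -/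
open Finset

lemma mem_LhSet (F : Finset (ℤ × ℤ)) (p : ℤ × ℤ) :
    p ∈ (F ∪ F.image fun q => (q.1 - 1, q.2)).filter
      (fun q => decide (q ∈ F) ≠ decide ((q.1 + 1, q.2) ∈ F)) ↔
    ¬(p ∈ F ↔ (p.1 + 1, p.2) ∈ F) := by
  simp only [mem_filter, mem_union, mem_image, ne_eq, decide_eq_decide]
  constructor
  · tauto
  · intro h
    refine ⟨?_, h⟩
    by_cases hp : p ∈ F
    · exact Or.inl hp
    · right
      have h2 : (p.1 + 1, p.2) ∈ F := by tauto
      exact ⟨(p.1 + 1, p.2), h2, by simp⟩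

lemma Lh_part (m n : ℕ) (hm : 1 ≤ m) (hn : 1 ≤ n)
    (F : Finset (ℤ × ℤ))
    (hF : F ⊆ Finset.Icc 1 (m : ℤ) ×ˢ Finset.Icc 1 (n : ℤ))
    (F' : Finset (ℤ × ℤ))
    (hF' : F' = F ∪ (Finset.Icc (0 : ℤ) (n : ℤ)).image (fun j => ((0 : ℤ), j))
        ∪ (Finset.Icc (1 : ℤ) (m : ℤ)).image (fun i => (i, (0 : ℤ)))) :
    Lh F' = Lh F + 2 * (n + 1 - rowSum F 1) := by
  have hb : ∀ x y : ℤ, (x, y) ∈ F → 1 ≤ x ∧ x ≤ m ∧ 1 ≤ y ∧ y ≤ n := by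
    intro x y h
    have := hF h
    simp only [mem_product, mem_Icc] at this
    exact ⟨this.1.1, this.1.2, this.2.1, this.2.2⟩
  have hnF : ∀ x y : ℤ, (¬(1 ≤ x ∧ x ≤ m ∧ 1 ≤ y ∧ y ≤ n)) → (x, y) ∉ F :=
    fun x y h hf => h (hb x y hf)
  have hmem : ∀ x y : ℤ, ((x, y) ∈ F') ↔
      ((x, y) ∈ F ∨ (x = 0 ∧ 0 ≤ y ∧ y ≤ n) ∨ (1 ≤ x ∧ x ≤ m ∧ y = 0)) := by
    intro x y
    subst hF'
    simp only [mem_union, mem_image, mem_Icc, Prod.mk.injEq]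
    constructor
    · rintro ((h | ⟨a, ha, h1, h2⟩) | ⟨a, ha, h1, h2⟩)
      · exact Or.inl h
      · exact Or.inr (Or.inl ⟨h1.symm, h2 ▸ ha⟩)
      · exact Or.inr (Or.inr ⟨h1 ▸ ha.1, h1 ▸ ha.2, h2.symm⟩)
    · rintro (h | ⟨h1, h2⟩ | ⟨h1, h2, h3⟩)
      · exact Or.inl (Or.inl h)
      · exact Or.inl (Or.inr ⟨y, by omega, h1.symm, rfl⟩)
      · exact Or.inr ⟨x, by omega, rfl, h3.symm⟩
  set S : Finset ℤ := (Icc (1 : ℤ) (n : ℤ)).filter (fun j => ((1 : ℤ), j) ∈ F) with hSdef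
  set T : Finset ℤ := (Icc (1 : ℤ) (n : ℤ)).filter (fun j => ((1 : ℤ), j) ∉ F) with hTdef
  set D : Finset (ℤ × ℤ) := S.image (fun j => ((0 : ℤ), j)) with hDdef
  set A1 : Finset (ℤ × ℤ) := (Icc (0 : ℤ) (n : ℤ)).image (fun j => ((-1 : ℤ), j)) with hA1def
  set A2 : Finset (ℤ × ℤ) := {((m : ℤ), 0)} with hA2def
  set A3 : Finset (ℤ × ℤ) := T.image (fun j => ((0 : ℤ), j)) with hA3def
  have hD : ∀ x y : ℤ, ((x, y) ∈ D) ↔ (x = 0 ∧ 1 ≤ y ∧ y ≤ n ∧ ((1 : ℤ), y) ∈ F) := by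
    intro x y
    simp only [hDdef, hSdef, mem_image, mem_filter, mem_Icc, Prod.mk.injEq]
    constructor
    · rintro ⟨a, ⟨⟨h1, h2⟩, h3⟩, h4, h5⟩
      exact ⟨h4.symm, by omega, by omega, h5 ▸ h3⟩
    · rintro ⟨h1, h2, h3, h4⟩
      exact ⟨y, ⟨⟨h2, h3⟩, h4⟩, h1.symm, rfl⟩
  have hA : ∀ x y : ℤ, ((x, y) ∈ A1 ∪ A2 ∪ A3) ↔
      ((x = -1 ∧ 0 ≤ y ∧ y ≤ n) ∨ (x = m ∧ y = 0) ∨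
        (x = 0 ∧ 1 ≤ y ∧ y ≤ n ∧ ((1 : ℤ), y) ∉ F)) := by
    intro x y
    simp only [mem_union, hA1def, hA2def, hA3def, hTdef, mem_image, mem_filter, mem_Icc,
      mem_singleton, Prod.mk.injEq]
    constructor
    · rintro ((⟨a, ha, h1, h2⟩ | ⟨h1, h2⟩) | ⟨a, ⟨⟨h1, h2⟩, h3⟩, h4, h5⟩)
      · exact Or.inl ⟨h1.symm, by omega⟩
      · exact Or.inr (Or.inl ⟨h1, h2⟩)
      · exact Or.inr (Or.inr ⟨h4.symm, by omega, by omega, h5 ▸ h3⟩)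
    · rintro (⟨h1, h2, h3⟩ | ⟨h1, h2⟩ | ⟨h1, h2, h3, h4⟩)
      · exact Or.inl (Or.inl ⟨y, by omega, h1.symm, rfl⟩)
      · exact Or.inl (Or.inr ⟨h1, h2⟩)
      · exact Or.inr ⟨y, ⟨⟨h2, h3⟩, h4⟩, h1.symm, rfl⟩
  have hkey : ((F' ∪ F'.image fun p => (p.1 - 1, p.2)).filter
        fun p => decide (p ∈ F') ≠ decide ((p.1 + 1, p.2) ∈ F'))
      = (((F ∪ F.image fun p => (p.1 - 1, p.2)).filter
        fun p => decide (p ∈ F) ≠ decide ((p.1 + 1, p.2) ∈ F)) \ D) ∪ (A1 ∪ A2 ∪ A3) := by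
    ext ⟨i, j⟩
    rw [mem_union, mem_sdiff, mem_LhSet, mem_LhSet]
    simp only [hD, hA]
    rw [hmem, hmem]
    by_cases hi : i = 0
    · subst hi
      have h0 : ((0 : ℤ), j) ∉ F := hnF 0 j (by omega)
      have e1 : ((0 : ℤ) + 1, j) = ((1 : ℤ), j) := by norm_num
      rw [e1]
      by_cases h3 : ((1 : ℤ), j) ∈ F
      · have b3 := hb 1 j h3
        simp only [h0, h3, true_or, false_or, or_true, or_false, true_iff, iff_true,
          false_iff, iff_false, true_and, and_true, false_and, and_false, not_true,
          not_false_eq_true, not_not, not_false_iff]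
        omega
      · simp only [h0, h3, true_or, false_or, or_true, or_false, true_iff, iff_true,
          false_iff, iff_false, true_and, and_true, false_and, and_false, not_true,
          not_false_eq_true, not_not, not_false_iff]
        omega
    · have b1 : ((i : ℤ), j) ∈ F → 1 ≤ i ∧ i ≤ m ∧ 1 ≤ j ∧ j ≤ n := hb i j
      have b2 : ((i : ℤ) + 1, j) ∈ F → 1 ≤ i + 1 ∧ i + 1 ≤ m ∧ 1 ≤ j ∧ j ≤ n := hb (i + 1) j
      by_cases h1 : ((i : ℤ), j) ∈ F <;> by_cases h2 : ((i : ℤ) + 1, j) ∈ F <;>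
        [skip; skip; skip; skip] <;>
        simp only [h1, h2, hi, forall_true_left, true_or, false_or, or_true, or_false,
          true_iff, iff_true, false_iff, iff_false, true_and, and_true, false_and, and_false,
          not_true, not_false_eq_true, not_not, not_false_iff, true_implies, false_implies] at b1 b2 ⊢ <;>
        omega
  have hDsub : D ⊆ ((F ∪ F.image fun p => (p.1 - 1, p.2)).filter
        fun p => decide (p ∈ F) ≠ decide ((p.1 + 1, p.2) ∈ F)) := by
    intro ⟨x, y⟩ hp
    rw [hD] at hp
    obtain ⟨hx, hy1, hy2, hf⟩ := hp
    subst hx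
    rw [mem_LhSet]
    have h0 : ((0 : ℤ), y) ∉ F := hnF 0 y (by omega)
    have e1 : ((0 : ℤ) + 1, y) = ((1 : ℤ), y) := by norm_num
    intro hc
    exact h0 (hc.mpr (e1 ▸ hf))
  have hdisjBA : Disjoint (((F ∪ F.image fun p => (p.1 - 1, p.2)).filter
        fun p => decide (p ∈ F) ≠ decide ((p.1 + 1, p.2) ∈ F)) \ D) (A1 ∪ A2 ∪ A3) := by
    rw [disjoint_right]
    intro ⟨x, y⟩ hp hq
    rw [hA] at hp
    rw [mem_sdiff, mem_LhSet] at hq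
    rcases hp with ⟨h1, h2, h3⟩ | ⟨h1, h2⟩ | ⟨h1, h2, h3, h4⟩
    · subst h1
      exact hq.1 (iff_of_false (hnF _ _ (by omega)) (hnF _ _ (by omega)))
    · subst h1; subst h2
      exact hq.1 (iff_of_false (hnF _ _ (by omega)) (hnF _ _ (by omega)))
    · subst h1
      refine hq.1 (iff_of_false (hnF _ _ (by omega)) ?_)
      have e1 : ((0 : ℤ) + 1, y) = ((1 : ℤ), y) := by norm_num
      rw [e1]; exact h4
  have hd12 : Disjoint A1 A2 := by
    rw [disjoint_left]
    intro ⟨x, y⟩ hp hq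
    simp only [hA1def, hA2def, mem_image, mem_singleton, Prod.mk.injEq] at hp hq
    obtain ⟨a, _, h1, _⟩ := hp
    omega
  have hd123 : Disjoint (A1 ∪ A2) A3 := by
    rw [disjoint_left]
    intro ⟨x, y⟩ hp hq
    simp only [hA1def, hA2def, hA3def, mem_union, mem_image, mem_singleton,
      Prod.mk.injEq] at hp hq
    obtain ⟨a, _, h1, _⟩ := hq
    rcases hp with ⟨b, _, h2, _⟩ | ⟨h2, _⟩ <;> omega
  have hScard : S.card = rowSum F 1 := by
    rw [rowSum]
    apply Finset.card_bij (fun j _ => ((1 : ℤ), j))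
    · intro a ha
      rw [hSdef, mem_filter] at ha
      rw [mem_filter]
      exact ⟨ha.2, rfl⟩
    · intro a _ b _ h
      simpa using h
    · intro ⟨x, y⟩ hp
      rw [mem_filter] at hp
      have hx : x = 1 := hp.2
      subst hx
      have := hb _ _ hp.1
      refine ⟨y, ?_, rfl⟩
      rw [hSdef, mem_filter, mem_Icc]
      exact ⟨⟨by omega, by omega⟩, hp.1⟩
  have hST : S.card + T.card = n := by
    rw [hSdef, hTdef]
    rw [Finset.card_filter_add_card_filter_not]
    simp [Int.card_Icc]
  have hDcard : D.card = S.card := by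
    rw [hDdef]
    apply card_image_of_injective
    intro a b h
    simpa using h
  have hA1card : A1.card = n + 1 := by
    rw [hA1def, card_image_of_injective]
    · simp [Int.card_Icc]
    · intro a b h; simpa using h
  have hA3card : A3.card = T.card := by
    rw [hA3def]
    apply card_image_of_injective
    intro a b h
    simpa using h
  have hLF : Lh F = ((F ∪ F.image fun p => (p.1 - 1, p.2)).filter
        fun p => decide (p ∈ F) ≠ decide ((p.1 + 1, p.2) ∈ F)).card := rfl
  have hDle : D.card ≤ Lh F := hLF ▸ card_le_card hDsub
  have hcalc : Lh F' = (Lh F - D.card) + ((A1.card + A2.card) + A3.card) := by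
    rw [Lh, hkey, card_union_of_disjoint hdisjBA, card_sdiff_of_subset hDsub,
      card_union_of_disjoint hd123, card_union_of_disjoint hd12, hLF]
  rw [hcalc, hA2def]
  simp only [card_singleton]
  omega

lemma mem_LvSet (F : Finset (ℤ × ℤ)) (p : ℤ × ℤ) :
    p ∈ (F ∪ F.image fun q => (q.1, q.2 - 1)).filter
      (fun q => decide (q ∈ F) ≠ decide ((q.1, q.2 + 1) ∈ F)) ↔
    ¬(p ∈ F ↔ (p.1, p.2 + 1) ∈ F) := by
  simp only [mem_filter, mem_union, mem_image, ne_eq, decide_eq_decide]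
  constructor
  · tauto
  · intro h
    refine ⟨?_, h⟩
    by_cases hp : p ∈ F
    · exact Or.inl hp
    · right
      have h2 : (p.1, p.2 + 1) ∈ F := by tauto
      exact ⟨(p.1, p.2 + 1), h2, by simp⟩

lemma Lv_part (m n : ℕ) (hm : 1 ≤ m) (hn : 1 ≤ n)
    (F : Finset (ℤ × ℤ))
    (hF : F ⊆ Finset.Icc 1 (m : ℤ) ×ˢ Finset.Icc 1 (n : ℤ))
    (F' : Finset (ℤ × ℤ))
    (hF' : F' = F ∪ (Finset.Icc (0 : ℤ) (n : ℤ)).image (fun j => ((0 : ℤ), j))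
        ∪ (Finset.Icc (1 : ℤ) (m : ℤ)).image (fun i => (i, (0 : ℤ)))) :
    Lv F' = Lv F + 2 * (m + 1 - colSum F 1) := by
  have hb : ∀ x y : ℤ, (x, y) ∈ F → 1 ≤ x ∧ x ≤ m ∧ 1 ≤ y ∧ y ≤ n := by
    intro x y h
    have := hF h
    simp only [mem_product, mem_Icc] at this
    exact ⟨this.1.1, this.1.2, this.2.1, this.2.2⟩
  have hnF : ∀ x y : ℤ, (¬(1 ≤ x ∧ x ≤ m ∧ 1 ≤ y ∧ y ≤ n)) → (x, y) ∉ F :=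
    fun x y h hf => h (hb x y hf)
  have hmem : ∀ x y : ℤ, ((x, y) ∈ F') ↔
      ((x, y) ∈ F ∨ (x = 0 ∧ 0 ≤ y ∧ y ≤ n) ∨ (1 ≤ x ∧ x ≤ m ∧ y = 0)) := by
    intro x y
    subst hF'
    simp only [mem_union, mem_image, mem_Icc, Prod.mk.injEq]
    constructor
    · rintro ((h | ⟨a, ha, h1, h2⟩) | ⟨a, ha, h1, h2⟩)
      · exact Or.inl h
      · exact Or.inr (Or.inl ⟨h1.symm, h2 ▸ ha⟩)
      · exact Or.inr (Or.inr ⟨h1 ▸ ha.1, h1 ▸ ha.2, h2.symm⟩)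
    · rintro (h | ⟨h1, h2⟩ | ⟨h1, h2, h3⟩)
      · exact Or.inl (Or.inl h)
      · exact Or.inl (Or.inr ⟨y, by omega, h1.symm, rfl⟩)
      · exact Or.inr ⟨x, by omega, rfl, h3.symm⟩
  set S : Finset ℤ := (Icc (1 : ℤ) (m : ℤ)).filter (fun i => (i, (1 : ℤ)) ∈ F) with hSdef
  set T : Finset ℤ := (Icc (1 : ℤ) (m : ℤ)).filter (fun i => (i, (1 : ℤ)) ∉ F) with hTdef
  set D : Finset (ℤ × ℤ) := S.image (fun i => (i, (0 : ℤ))) with hDdef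
  set A1 : Finset (ℤ × ℤ) := (Icc (0 : ℤ) (m : ℤ)).image (fun i => (i, (-1 : ℤ))) with hA1def
  set A2 : Finset (ℤ × ℤ) := {((0 : ℤ), (n : ℤ))} with hA2def
  set A3 : Finset (ℤ × ℤ) := T.image (fun i => (i, (0 : ℤ))) with hA3def
  have hD : ∀ x y : ℤ, ((x, y) ∈ D) ↔ (y = 0 ∧ 1 ≤ x ∧ x ≤ m ∧ (x, (1 : ℤ)) ∈ F) := by
    intro x y
    simp only [hDdef, hSdef, mem_image, mem_filter, mem_Icc, Prod.mk.injEq]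
    constructor
    · rintro ⟨a, ⟨⟨h1, h2⟩, h3⟩, h4, h5⟩
      exact ⟨h5.symm, by omega, by omega, h4 ▸ h3⟩
    · rintro ⟨h1, h2, h3, h4⟩
      exact ⟨x, ⟨⟨h2, h3⟩, h4⟩, rfl, h1.symm⟩
  have hA : ∀ x y : ℤ, ((x, y) ∈ A1 ∪ A2 ∪ A3) ↔
      ((y = -1 ∧ 0 ≤ x ∧ x ≤ m) ∨ (x = 0 ∧ y = n) ∨
        (y = 0 ∧ 1 ≤ x ∧ x ≤ m ∧ (x, (1 : ℤ)) ∉ F)) := by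
    intro x y
    simp only [mem_union, hA1def, hA2def, hA3def, hTdef, mem_image, mem_filter, mem_Icc,
      mem_singleton, Prod.mk.injEq]
    constructor
    · rintro ((⟨a, ha, h1, h2⟩ | ⟨h1, h2⟩) | ⟨a, ⟨⟨h1, h2⟩, h3⟩, h4, h5⟩)
      · exact Or.inl ⟨h2.symm, by omega⟩
      · exact Or.inr (Or.inl ⟨h1, h2⟩)
      · exact Or.inr (Or.inr ⟨h5.symm, by omega, by omega, h4 ▸ h3⟩)
    · rintro (⟨h1, h2, h3⟩ | ⟨h1, h2⟩ | ⟨h1, h2, h3, h4⟩)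
      · exact Or.inl (Or.inl ⟨x, by omega, rfl, h1.symm⟩)
      · exact Or.inl (Or.inr ⟨h1, h2⟩)
      · exact Or.inr ⟨x, ⟨⟨h2, h3⟩, h4⟩, rfl, h1.symm⟩
  have hkey : ((F' ∪ F'.image fun p => (p.1, p.2 - 1)).filter
        fun p => decide (p ∈ F') ≠ decide ((p.1, p.2 + 1) ∈ F'))
      = (((F ∪ F.image fun p => (p.1, p.2 - 1)).filter
        fun p => decide (p ∈ F) ≠ decide ((p.1, p.2 + 1) ∈ F)) \ D) ∪ (A1 ∪ A2 ∪ A3) := by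
    ext ⟨i, j⟩
    rw [mem_union, mem_sdiff, mem_LvSet, mem_LvSet]
    simp only [hD, hA]
    rw [hmem, hmem]
    by_cases hj : j = 0
    · subst hj
      have h0 : ((i : ℤ), (0 : ℤ)) ∉ F := hnF i 0 (by omega)
      have e1 : ((i : ℤ), (0 : ℤ) + 1) = ((i : ℤ), (1 : ℤ)) := by norm_num
      rw [e1]
      by_cases h3 : ((i : ℤ), (1 : ℤ)) ∈ F
      · have b3 := hb i 1 h3
        simp only [h0, h3, true_or, false_or, or_true, or_false, true_iff, iff_true,
          false_iff, iff_false, true_and, and_true, false_and, and_false, not_true,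
          not_false_eq_true, not_not, not_false_iff]
        omega
      · simp only [h0, h3, true_or, false_or, or_true, or_false, true_iff, iff_true,
          false_iff, iff_false, true_and, and_true, false_and, and_false, not_true,
          not_false_eq_true, not_not, not_false_iff]
        omega
    · have b1 : ((i : ℤ), j) ∈ F → 1 ≤ i ∧ i ≤ m ∧ 1 ≤ j ∧ j ≤ n := hb i j
      have b2 : ((i : ℤ), j + 1) ∈ F → 1 ≤ i ∧ i ≤ m ∧ 1 ≤ j + 1 ∧ j + 1 ≤ n := hb i (j + 1)
      by_cases h1 : ((i : ℤ), j) ∈ F <;> by_cases h2 : ((i : ℤ), j + 1) ∈ F <;>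
        simp only [h1, h2, hj, forall_true_left, true_or, false_or, or_true, or_false,
          true_iff, iff_true, false_iff, iff_false, true_and, and_true, false_and, and_false,
          not_true, not_false_eq_true, not_not, not_false_iff, true_implies, false_implies] at b1 b2 ⊢ <;>
        omega
  have hDsub : D ⊆ ((F ∪ F.image fun p => (p.1, p.2 - 1)).filter
        fun p => decide (p ∈ F) ≠ decide ((p.1, p.2 + 1) ∈ F)) := by
    intro ⟨x, y⟩ hp
    rw [hD] at hp
    obtain ⟨hy, hx1, hx2, hf⟩ := hp
    subst hy
    rw [mem_LvSet]
    have h0 : ((x : ℤ), (0 : ℤ)) ∉ F := hnF x 0 (by omega)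
    have e1 : ((x : ℤ), (0 : ℤ) + 1) = ((x : ℤ), (1 : ℤ)) := by norm_num
    intro hc
    exact h0 (hc.mpr (e1 ▸ hf))
  have hdisjBA : Disjoint (((F ∪ F.image fun p => (p.1, p.2 - 1)).filter
        fun p => decide (p ∈ F) ≠ decide ((p.1, p.2 + 1) ∈ F)) \ D) (A1 ∪ A2 ∪ A3) := by
    rw [disjoint_right]
    intro ⟨x, y⟩ hp hq
    rw [hA] at hp
    rw [mem_sdiff, mem_LvSet] at hq
    rcases hp with ⟨h1, h2, h3⟩ | ⟨h1, h2⟩ | ⟨h1, h2, h3, h4⟩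
    · subst h1
      exact hq.1 (iff_of_false (hnF _ _ (by omega)) (hnF _ _ (by omega)))
    · subst h1; subst h2
      exact hq.1 (iff_of_false (hnF _ _ (by omega)) (hnF _ _ (by omega)))
    · subst h1
      refine hq.1 (iff_of_false (hnF _ _ (by omega)) ?_)
      have e1 : ((x : ℤ), (0 : ℤ) + 1) = ((x : ℤ), (1 : ℤ)) := by norm_num
      rw [e1]; exact h4
  have hd12 : Disjoint A1 A2 := by
    rw [disjoint_left]
    intro ⟨x, y⟩ hp hq
    simp only [hA1def, hA2def, mem_image, mem_singleton, Prod.mk.injEq] at hp hq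
    obtain ⟨a, _, _, h1⟩ := hp
    omega
  have hd123 : Disjoint (A1 ∪ A2) A3 := by
    rw [disjoint_left]
    intro ⟨x, y⟩ hp hq
    simp only [hA1def, hA2def, hA3def, mem_union, mem_image, mem_singleton,
      Prod.mk.injEq] at hp hq
    obtain ⟨a, _, _, h1⟩ := hq
    rcases hp with ⟨b, _, _, h2⟩ | ⟨_, h2⟩ <;> omega
  have hScard : S.card = colSum F 1 := by
    rw [colSum]
    apply Finset.card_bij (fun i _ => ((i : ℤ), (1 : ℤ)))
    · intro a ha
      rw [hSdef, mem_filter] at ha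
      rw [mem_filter]
      exact ⟨ha.2, rfl⟩
    · intro a _ b _ h
      simpa using h
    · intro ⟨x, y⟩ hp
      rw [mem_filter] at hp
      have hy : y = 1 := hp.2
      subst hy
      have := hb _ _ hp.1
      refine ⟨x, ?_, rfl⟩
      rw [hSdef, mem_filter, mem_Icc]
      exact ⟨⟨by omega, by omega⟩, hp.1⟩
  have hST : S.card + T.card = m := by
    rw [hSdef, hTdef]
    rw [Finset.card_filter_add_card_filter_not]
    simp [Int.card_Icc]
  have hDcard : D.card = S.card := by
    rw [hDdef]
    apply card_image_of_injective
    intro a b h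
    simpa using h
  have hA1card : A1.card = m + 1 := by
    rw [hA1def, card_image_of_injective]
    · simp [Int.card_Icc]
    · intro a b h; simpa using h
  have hA3card : A3.card = T.card := by
    rw [hA3def]
    apply card_image_of_injective
    intro a b h
    simpa using h
  have hLF : Lv F = ((F ∪ F.image fun p => (p.1, p.2 - 1)).filter
        fun p => decide (p ∈ F) ≠ decide ((p.1, p.2 + 1) ∈ F)).card := rfl
  have hDle : D.card ≤ Lv F := hLF ▸ card_le_card hDsub
  have hcalc : Lv F' = (Lv F - D.card) + ((A1.card + A2.card) + A3.card) := by
    rw [Lv, hkey, card_union_of_disjoint hdisjBA, card_sdiff_of_subset hDsub,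
      card_union_of_disjoint hd123, card_union_of_disjoint hd12, hLF]
  rw [hcalc, hA2def]
  simp only [card_singleton]
  omega

/-- Let `F ⊆ {1,…,m} × {1,…,n}` have non-increasing row sums. Adjoining a full row
`{(0,j) : 0 ≤ j ≤ n}` and a full column `{(i,0) : 1 ≤ i ≤ m}` changes the boundary
lengths by `Lh F' = Lh F + 2(n + 1 - r₁)` and `Lv F' = Lv F + 2(m + 1 - c₁)`. -/
theorem boundary_of_bordered (m n : ℕ) (hm : 1 ≤ m) (hn : 1 ≤ n)
    (F : Finset (ℤ × ℤ))
    (hF : F ⊆ Finset.Icc 1 (m : ℤ) ×ˢ Finset.Icc 1 (n : ℤ))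
    (hr : ∀ i i' : ℕ, 1 ≤ i → i ≤ i' → i' ≤ m → rowSum F i' ≤ rowSum F i)
    (F' : Finset (ℤ × ℤ))
    (hF' : F' = F ∪ (Finset.Icc (0 : ℤ) (n : ℤ)).image (fun j => ((0 : ℤ), j))
        ∪ (Finset.Icc (1 : ℤ) (m : ℤ)).image (fun i => (i, (0 : ℤ)))) :
    Lh F' = Lh F + 2 * (n + 1 - rowSum F 1) ∧
      Lv F' = Lv F + 2 * (m + 1 - colSum F 1) := by
  exact ⟨Lh_part m n hm hn F hF F' hF', Lv_part m n hm hn F hF F' hF'⟩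
end

section
/- For odd n, with m = n and R = C = (n, n−1, n−1, n−3, n−3, ..., 4, 4, 2, 2), the conjugate sequence is (b_1,...,b_n) = (n, n, n−2, n−2, ..., 3, 3, 1) and α = (1/2)Σ|r_i − b_i| = (n−1)/2. -/
open Finset

/-- For odd `n`, with `R = C = (n, n-1, n-1, n-3, n-3, …, 4, 4, 2, 2)` (i.e. `c 1 = n`
and `c j = n + 1 - 2⌊j/2⌋` for `2 ≤ j ≤ n`), the conjugate sequence is
`(n, n, n-2, n-2, …, 3, 3, 1)` and `2α = ∑ |cᵢ - bᵢ| = n - 1`. -/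
theorem example_one (n : ℕ) (hodd : Odd n) (hn : 1 ≤ n)
    (c : ℕ → ℕ) (hc1 : c 1 = n)
    (hc2 : ∀ j : ℕ, 2 ≤ j → j ≤ n → c j = n + 1 - 2 * (j / 2))
    (b : ℕ → ℕ)
    (hb : ∀ i : ℕ, b i = ((Finset.Icc 1 n).filter fun j => i ≤ c j).card) :
    (∀ i : ℕ, 1 ≤ i → i ≤ n →
        b i = if i ≤ 2 then n else n - 2 * ((i - 1) / 2)) ∧
      ∑ i ∈ Finset.Icc 1 n, ((c i : ℤ) - b i).natAbs = n - 1 := by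
  obtain ⟨m, hm⟩ := hodd
  have hbf : ∀ i : ℕ, 1 ≤ i → i ≤ n →
      b i = if i ≤ 2 then n else n - 2 * ((i - 1) / 2) := by
    intro i hi1 hin
    rw [hb]
    have hfil : (Finset.Icc 1 n).filter (fun j => i ≤ c j)
        = Finset.Icc 1 (if i ≤ 2 then n else n - 2 * ((i - 1) / 2)) := by
      ext j
      simp only [Finset.mem_filter, Finset.mem_Icc]
      constructor
      · rintro ⟨⟨h1, h2⟩, h3⟩
        refine ⟨h1, ?_⟩
        rcases Nat.eq_or_lt_of_le h1 with h | h
        · split <;> omega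
        · have hj2 : 2 ≤ j := h
          rw [hc2 j hj2 h2] at h3
          split <;> omega
      · rintro ⟨h1, h2⟩
        have hjn : j ≤ n := by split at h2 <;> omega
        refine ⟨⟨h1, hjn⟩, ?_⟩
        rcases Nat.eq_or_lt_of_le h1 with h | h
        · rw [← h, hc1]; omega
        · rw [hc2 j h hjn]
          split at h2 <;> omega
    rw [hfil, Nat.card_Icc]
    split <;> omega
  refine ⟨hbf, ?_⟩
  have key : ∀ i ∈ Finset.Icc 1 n, ((c i : ℤ) - b i).natAbs
      = if i = 1 then 0 else 1 := by
    intro i hi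
    simp only [Finset.mem_Icc] at hi
    have hbi := hbf i hi.1 hi.2
    by_cases h1 : i = 1
    · subst h1
      rw [hc1, hbi]
      simp
    · have h2 : 2 ≤ i := by omega
      rw [hc2 i h2 hi.2, hbi, if_neg h1]
      split <;> omega
  rw [Finset.sum_congr rfl key]
  have hsplit : Finset.Icc 1 n = insert 1 (Finset.Icc 2 n) := by
    ext j; simp only [Finset.mem_Icc, Finset.mem_insert]; omega
  rw [hsplit, Finset.sum_insert (by simp), if_pos rfl,
    Finset.sum_congr rfl (fun i hi => if_neg (by
      simp only [Finset.mem_Icc] at hi; omega)),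
    Finset.sum_const, Nat.card_Icc, smul_eq_mul, mul_one]
  omega
end

section
/- For a positive integer k, with m = n = 2k+1 and R = C = (2k+1, k+1, k+1, ..., k+1), one has b_i = 2k+1 for i ≤ k+1 and b_i = 1 for i ≥ k+2, d_1 = 0, d_i = k for 2 ≤ i ≤ k+1, d_i = −k for k+2 ≤ i ≤ 2k+1, and α = k² = (m−1)(n−1)/4. Thus the bound α ≤ (m−1)(n−1)/4 is attained. -/
open Finset

/-- For `m = n = 2k+1` and `R = C = (2k+1, k+1, …, k+1)`: `bᵢ = 2k+1` for `i ≤ k+1`,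
`bᵢ = 1` for `i ≥ k+2`; `d 1 = 0`, `dᵢ = k` for `2 ≤ i ≤ k+1`, `dᵢ = -k` for
`k+2 ≤ i ≤ 2k+1`; and `2α = ∑ |dᵢ| = 2k²`, so `α = k² = (m-1)(n-1)/4` and the bound
`α ≤ (m-1)(n-1)/4` is attained. -/
theorem example_alpha_max (k : ℕ) (hk : 1 ≤ k)
    (c : ℕ → ℕ) (hc1 : c 1 = 2 * k + 1)
    (hc2 : ∀ j : ℕ, 2 ≤ j → j ≤ 2 * k + 1 → c j = k + 1)
    (b : ℕ → ℕ)
    (hb : ∀ i : ℕ, b i = ((Finset.Icc 1 (2 * k + 1)).filter fun j => i ≤ c j).card)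
    (d : ℕ → ℤ) (hd : ∀ i : ℕ, d i = (b i : ℤ) - c i) :
    (∀ i : ℕ, 1 ≤ i → i ≤ k + 1 → b i = 2 * k + 1) ∧
      (∀ i : ℕ, k + 2 ≤ i → i ≤ 2 * k + 1 → b i = 1) ∧
      d 1 = 0 ∧
      (∀ i : ℕ, 2 ≤ i → i ≤ k + 1 → d i = (k : ℤ)) ∧
      (∀ i : ℕ, k + 2 ≤ i → i ≤ 2 * k + 1 → d i = -(k : ℤ)) ∧
      (∑ i ∈ Finset.Icc 1 (2 * k + 1), (d i).natAbs = 2 * k ^ 2) ∧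
      k ^ 2 = ((2 * k + 1) - 1) * ((2 * k + 1) - 1) / 4 := by
  have hb1 : ∀ i : ℕ, 1 ≤ i → i ≤ k + 1 → b i = 2 * k + 1 := by
    intro i _ hi2
    rw [hb]
    have : (Finset.Icc 1 (2 * k + 1)).filter (fun j => i ≤ c j)
        = Finset.Icc 1 (2 * k + 1) := by
      apply Finset.filter_true_of_mem
      intro j hj
      rw [Finset.mem_Icc] at hj
      rcases eq_or_lt_of_le hj.1 with h1 | h1
      · rw [← h1, hc1]; omega
      · rw [hc2 j (by omega) hj.2]; omega
    rw [this, Nat.card_Icc]; omega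
  have hb2 : ∀ i : ℕ, k + 2 ≤ i → i ≤ 2 * k + 1 → b i = 1 := by
    intro i hi1 hi2
    rw [hb]
    have : (Finset.Icc 1 (2 * k + 1)).filter (fun j => i ≤ c j) = {1} := by
      ext j
      simp only [Finset.mem_filter, Finset.mem_Icc, Finset.mem_singleton]
      constructor
      · rintro ⟨⟨h1, h2⟩, h3⟩
        by_contra hne
        rw [hc2 j (by omega) h2] at h3
        omega
      · rintro rfl
        rw [hc1]; omega
    rw [this, Finset.card_singleton]
  have hd1 : d 1 = 0 := by rw [hd, hb1 1 le_rfl (by omega), hc1]; push_cast; ring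
  have hdk : ∀ i : ℕ, 2 ≤ i → i ≤ k + 1 → d i = (k : ℤ) := by
    intro i h1 h2
    rw [hd, hb1 i (by omega) h2, hc2 i h1 (by omega)]
    push_cast; ring
  have hdk' : ∀ i : ℕ, k + 2 ≤ i → i ≤ 2 * k + 1 → d i = -(k : ℤ) := by
    intro i h1 h2
    rw [hd, hb2 i h1 h2, hc2 i (by omega) h2]
    push_cast; ring
  have hlast : k ^ 2 = ((2 * k + 1) - 1) * ((2 * k + 1) - 1) / 4 := by
    have h : (2 * k + 1) - 1 = 2 * k := rfl
    rw [h, show 2 * k * (2 * k) = k ^ 2 * 4 from by ring, Nat.mul_div_cancel _ (by norm_num)]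
  refine ⟨hb1, hb2, hd1, hdk, hdk', ?_, hlast⟩
  have hsplit : Finset.Icc 1 (2 * k + 1)
      = Finset.Icc 1 (k + 1) ∪ Finset.Icc (k + 2) (2 * k + 1) := by
    ext x; simp only [Finset.mem_union, Finset.mem_Icc]; omega
  rw [hsplit, Finset.sum_union (by
    rw [Finset.disjoint_left]; intro a ha hb'
    simp only [Finset.mem_Icc] at ha hb'; omega)]
  have h1 : ∑ i ∈ Finset.Icc 1 (k + 1), (d i).natAbs = k * k := by
    rw [show Finset.Icc 1 (k + 1) = insert 1 (Finset.Icc 2 (k + 1)) from by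
      ext x; simp only [Finset.mem_insert, Finset.mem_Icc]; omega,
      Finset.sum_insert (by simp)]
    rw [hd1]
    have : ∑ i ∈ Finset.Icc 2 (k + 1), (d i).natAbs
        = ∑ i ∈ Finset.Icc 2 (k + 1), k := by
      apply Finset.sum_congr rfl
      intro i hi
      rw [Finset.mem_Icc] at hi
      rw [hdk i hi.1 hi.2, Int.natAbs_natCast]
    rw [this, Finset.sum_const, Nat.card_Icc]
    simp
  have h2 : ∑ i ∈ Finset.Icc (k + 2) (2 * k + 1), (d i).natAbs
      = ∑ i ∈ Finset.Icc (k + 2) (2 * k + 1), k := by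
    apply Finset.sum_congr rfl
    intro i hi
    rw [Finset.mem_Icc] at hi
    rw [hdk' i hi.1 hi.2, Int.natAbs_neg, Int.natAbs_natCast]
  rw [h1, h2, Finset.sum_const, Nat.card_Icc]
  simp only [smul_eq_mul]
  have : 2 * k + 1 + 1 - (k + 2) = k := by omega
  rw [this]
  ring
end

section
/- For m = n ≥ 2 and consistent line sums R = C = (n, 2, 2, ..., 2), every finite set F with these row and column sums satisfies L_h(F) ≥ 4n − 4 and L_v(F) ≥ 4n − 4, and there exists a set attaining both bounds. -/
open Finset

def bdryH (F : Finset (ℤ × ℤ)) : Finset (ℤ × ℤ) :=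
  (F ∪ F.image fun p => (p.1 - 1, p.2)).filter
    fun p => decide (p ∈ F) ≠ decide ((p.1 + 1, p.2) ∈ F)
def bdryV (F : Finset (ℤ × ℤ)) : Finset (ℤ × ℤ) :=
  (F ∪ F.image fun p => (p.1, p.2 - 1)).filter
    fun p => decide (p ∈ F) ≠ decide ((p.1, p.2 + 1) ∈ F)

lemma Lh_eq (F : Finset (ℤ × ℤ)) : Lh F = (bdryH F).card := rfl
lemma Lv_eq (F : Finset (ℤ × ℤ)) : Lv F = (bdryV F).card := rfl

lemma mem_bdryH {F : Finset (ℤ × ℤ)} {a b : ℤ} :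
    (a, b) ∈ bdryH F ↔ ((a,b) ∈ F ∧ (a+1,b) ∉ F) ∨ ((a,b) ∉ F ∧ (a+1,b) ∈ F) := by
  simp only [bdryH, mem_filter, mem_union, mem_image, ne_eq, decide_eq_decide, Prod.ext_iff]
  constructor
  · rintro ⟨h1, h2⟩
    by_cases h : (a,b) ∈ F
    · exact Or.inl ⟨h, fun hc => h2 ⟨fun _ => hc, fun _ => h⟩⟩
    · refine Or.inr ⟨h, ?_⟩
      rcases h1 with h1 | ⟨p, hp, hpa, hpb⟩
      · exact absurd h1 h
      · have : p = (a+1, b) := by ext <;> simp <;> omega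
        rwa [this] at hp
  · rintro (⟨h1, h2⟩ | ⟨h1, h2⟩)
    · exact ⟨Or.inl h1, fun he => h2 (he.1 h1)⟩
    · exact ⟨Or.inr ⟨(a+1, b), h2, by simp, rfl⟩, fun he => h1 (he.2 h2)⟩

lemma mem_bdryV {F : Finset (ℤ × ℤ)} {a b : ℤ} :
    (a, b) ∈ bdryV F ↔ ((a,b) ∈ F ∧ (a,b+1) ∉ F) ∨ ((a,b) ∉ F ∧ (a,b+1) ∈ F) := by
  simp only [bdryV, mem_filter, mem_union, mem_image, ne_eq, decide_eq_decide, Prod.ext_iff]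
  constructor
  · rintro ⟨h1, h2⟩
    by_cases h : (a,b) ∈ F
    · exact Or.inl ⟨h, fun hc => h2 ⟨fun _ => hc, fun _ => h⟩⟩
    · refine Or.inr ⟨h, ?_⟩
      rcases h1 with h1 | ⟨p, hp, hpa, hpb⟩
      · exact absurd h1 h
      · have : p = (a, b+1) := by ext <;> simp <;> omega
        rwa [this] at hp
  · rintro (⟨h1, h2⟩ | ⟨h1, h2⟩)
    · exact ⟨Or.inl h1, fun he => h2 (he.1 h1)⟩
    · exact ⟨Or.inr ⟨(a, b+1), h2, rfl, by simp⟩, fun he => h1 (he.2 h2)⟩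

lemma mem_swap {F : Finset (ℤ × ℤ)} {a b : ℤ} :
    (a, b) ∈ F.image Prod.swap ↔ (b, a) ∈ F := by
  constructor
  · intro h
    obtain ⟨p, hp, he⟩ := Finset.mem_image.1 h
    obtain ⟨x, y⟩ := p
    obtain ⟨rfl, rfl⟩ : y = a ∧ x = b := by
      simpa [Prod.ext_iff] using he
    exact hp
  · intro h
    exact Finset.mem_image.2 ⟨(b, a), h, rfl⟩

lemma Lv_eq_Lh_swap (F : Finset (ℤ × ℤ)) : Lv F = Lh (F.image Prod.swap) := by
  rw [Lv_eq, Lh_eq]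
  apply Finset.card_nbij' (i := Prod.swap) (j := Prod.swap)
  · rintro ⟨a, b⟩ h
    rw [mem_coe, mem_bdryV] at h
    rw [Prod.swap_prod_mk, mem_coe, mem_bdryH]
    simp only [mem_swap]
    exact h
  · rintro ⟨a, b⟩ h
    rw [mem_coe, mem_bdryH] at h
    rw [Prod.swap_prod_mk, mem_coe, mem_bdryV]
    simp only [mem_swap] at h
    exact h
  · intro a _; simp
  · intro a _; simp


lemma Lh_lower (n : ℕ) (hn : 2 ≤ n) (F : Finset (ℤ × ℤ))
    (hR : ∀ i : ℤ, rowSum F i =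
      if i = 1 then n else if 1 ≤ i ∧ i ≤ (n : ℤ) then 2 else 0)
    (hC : ∀ j : ℤ, colSum F j =
      if j = 1 then n else if 1 ≤ j ∧ j ≤ (n : ℤ) then 2 else 0) :
    4 * n - 4 ≤ Lh F := by
  have hn' : (2:ℤ) ≤ (n:ℤ) := by exact_mod_cast hn
  -- Step 1 : all points lie in [1,n] × [1,n]
  have hbound : ∀ p ∈ F, 1 ≤ p.1 ∧ p.1 ≤ (n:ℤ) ∧ 1 ≤ p.2 ∧ p.2 ≤ (n:ℤ) := by
    intro p hp
    have key : ∀ (G : Finset (ℤ×ℤ)) (f : ℤ×ℤ → ℤ) (q : ℤ×ℤ), q ∈ G →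
        (G.filter fun r => f r = f q).card = 0 → False := by
      intro G f q hq h0
      have : q ∈ G.filter fun r => f r = f q := mem_filter.2 ⟨hq, rfl⟩
      have := card_pos.2 ⟨q, this⟩
      omega
    constructor
    · by_contra hc
      refine key F Prod.fst p hp ?_
      have h := hR p.1
      rw [if_neg (by omega), if_neg (by omega)] at h
      exact h
    refine ⟨?_, ?_, ?_⟩
    · by_contra hc
      refine key F Prod.fst p hp ?_
      have h := hR p.1
      rw [if_neg (by omega), if_neg (by omega)] at h
      exact h
    · by_contra hc
      refine key F Prod.snd p hp ?_
      have h := hC p.2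
      rw [if_neg (by omega), if_neg (by omega)] at h
      exact h
    · by_contra hc
      refine key F Prod.snd p hp ?_
      have h := hC p.2
      rw [if_neg (by omega), if_neg (by omega)] at h
      exact h
  -- Step 2 : row 1 is full
  have hrow1 : ∀ j : ℤ, 1 ≤ j → j ≤ (n:ℤ) → ((1:ℤ), j) ∈ F := by
    have hA : (F.filter fun p => p.1 = 1).card = n := by
      have := hR 1; rwa [if_pos rfl] at this
    have hsub : (F.filter fun p => p.1 = 1) ⊆
        (Icc (1:ℤ) (n:ℤ)).image fun j => ((1:ℤ), j) := by
      intro p hp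
      obtain ⟨hpF, hp1⟩ := mem_filter.1 hp
      refine mem_image.2 ⟨p.2, ?_, ?_⟩
      · have := hbound p hpF; exact mem_Icc.2 ⟨this.2.2.1, this.2.2.2⟩
      · ext <;> simp [hp1.symm]
    have hcard : ((Icc (1:ℤ) (n:ℤ)).image fun j => ((1:ℤ), j)).card = n := by
      rw [Finset.card_image_of_injective _ (fun a b h => by simpa [Prod.ext_iff] using h)]
      rw [Int.card_Icc]
      omega
    have heq : (F.filter fun p => p.1 = 1) =
        (Icc (1:ℤ) (n:ℤ)).image fun j => ((1:ℤ), j) :=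
      Finset.eq_of_subset_of_card_le hsub (by omega)
    intro j h1 h2
    have : ((1:ℤ), j) ∈ (Icc (1:ℤ) (n:ℤ)).image fun j => ((1:ℤ), j) :=
      mem_image.2 ⟨j, mem_Icc.2 ⟨h1, h2⟩, rfl⟩
    rw [← heq] at this
    exact (mem_filter.1 this).1
  -- Step 3 : column 1 is full
  have hcol1 : ∀ i : ℤ, 1 ≤ i → i ≤ (n:ℤ) → (i, (1:ℤ)) ∈ F := by
    have hA : (F.filter fun p => p.2 = 1).card = n := by
      have := hC 1; rwa [if_pos rfl] at this
    have hsub : (F.filter fun p => p.2 = 1) ⊆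
        (Icc (1:ℤ) (n:ℤ)).image fun i => (i, (1:ℤ)) := by
      intro p hp
      obtain ⟨hpF, hp1⟩ := mem_filter.1 hp
      refine mem_image.2 ⟨p.1, ?_, ?_⟩
      · have := hbound p hpF; exact mem_Icc.2 ⟨this.1, this.2.1⟩
      · ext <;> simp [hp1.symm]
    have hcard : ((Icc (1:ℤ) (n:ℤ)).image fun i => (i, (1:ℤ))).card = n := by
      rw [Finset.card_image_of_injective _ (fun a b h => by simpa [Prod.ext_iff] using h)]
      rw [Int.card_Icc]
      omega
    have heq : (F.filter fun p => p.2 = 1) =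
        (Icc (1:ℤ) (n:ℤ)).image fun i => (i, (1:ℤ)) :=
      Finset.eq_of_subset_of_card_le hsub (by omega)
    intro i h1 h2
    have : (i, (1:ℤ)) ∈ (Icc (1:ℤ) (n:ℤ)).image fun i => (i, (1:ℤ)) :=
      mem_image.2 ⟨i, mem_Icc.2 ⟨h1, h2⟩, rfl⟩
    rw [← heq] at this
    exact (mem_filter.1 this).1
  -- Step 4 : description of column j for 2 ≤ j ≤ n
  have hcolj : ∀ j : ℤ, 2 ≤ j → j ≤ (n:ℤ) →
      ∃ i : ℤ, 2 ≤ i ∧ i ≤ (n:ℤ) ∧ ∀ r : ℤ, ((r, j) ∈ F ↔ r = 1 ∨ r = i) := by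
    intro j hj1 hj2
    have hcards : (F.filter fun p => p.2 = j).card = 2 := by
      have := hC j
      rwa [if_neg (by omega), if_pos (by omega)] at this
    have h1j : ((1:ℤ), j) ∈ F.filter fun p => p.2 = j :=
      mem_filter.2 ⟨hrow1 j (by omega) hj2, rfl⟩
    have hcarde : ((F.filter fun p => p.2 = j).erase ((1:ℤ), j)).card = 1 := by
      rw [card_erase_of_mem h1j, hcards]
    obtain ⟨y, hy⟩ := Finset.card_eq_one.1 hcarde
    have hymem : y ∈ (F.filter fun p => p.2 = j).erase ((1:ℤ), j) := by
      rw [hy]; exact mem_singleton_self y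
    have hyne : y ≠ ((1:ℤ), j) := (mem_erase.1 hymem).1
    have hys : y ∈ F.filter fun p => p.2 = j := (mem_erase.1 hymem).2
    have hyF : y ∈ F := (mem_filter.1 hys).1
    have hyj : y.2 = j := (mem_filter.1 hys).2
    have hb := hbound y hyF
    have hy1 : y.1 ≠ 1 := by
      intro hc; apply hyne; ext
      · exact hc
      · exact hyj
    refine ⟨y.1, by omega, hb.2.1, ?_⟩
    intro r
    constructor
    · intro hr
      have hrs : (r, j) ∈ F.filter fun p => p.2 = j := mem_filter.2 ⟨hr, rfl⟩
      by_cases hr1 : r = 1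
      · exact Or.inl hr1
      · right
        have : (r, j) ∈ (F.filter fun p => p.2 = j).erase ((1:ℤ), j) :=
          mem_erase.2 ⟨by simp [Prod.ext_iff, hr1], hrs⟩
        rw [hy] at this
        have := mem_singleton.1 this
        rw [← this]
    · rintro (rfl | rfl)
      · exact hrow1 j (by omega) hj2
      · have : y = (y.1, j) := by ext <;> simp [hyj]
        rwa [this] at hyF
  -- Step 5 : at most one column j ∈ [2,n] with (2,j) ∈ F
  have hrow2 : ((Icc (2:ℤ) (n:ℤ)).filter fun j => ((2:ℤ), j) ∈ F).card ≤ 1 := by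
    have hcards : (F.filter fun p => p.1 = 2).card = 2 := by
      have := hR 2
      rwa [if_neg (by omega), if_pos (by omega)] at this
    have h21 : ((2:ℤ), (1:ℤ)) ∈ F.filter fun p => p.1 = 2 :=
      mem_filter.2 ⟨hcol1 2 (by omega) hn', rfl⟩
    have hcarde : ((F.filter fun p => p.1 = 2).erase ((2:ℤ), (1:ℤ))).card = 1 := by
      rw [card_erase_of_mem h21, hcards]
    rw [← hcarde]
    apply Finset.card_le_card_of_injOn (fun j => ((2:ℤ), j))
    · intro j hj
      obtain ⟨hj1, hj2⟩ := mem_filter.1 hj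
      have hj1' := mem_Icc.1 hj1
      exact mem_erase.2 ⟨by simp [Prod.ext_iff]; omega, mem_filter.2 ⟨hj2, rfl⟩⟩
    · intro a _ b _ h
      simpa [Prod.ext_iff] using h
  -- Step 6 : fiberwise decomposition of the boundary
  have hfib : Lh F = ∑ j ∈ Icc (1:ℤ) (n:ℤ), ((bdryH F).filter fun p => p.2 = j).card := by
    rw [Lh_eq]
    apply Finset.card_eq_sum_card_fiberwise (f := Prod.snd)
    rintro ⟨a, b⟩ h
    rw [mem_coe, mem_bdryH] at h
    rcases h with ⟨h1, _⟩ | ⟨_, h1⟩ <;>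
      · have := hbound _ h1
        exact mem_Icc.2 ⟨this.2.2.1, this.2.2.2⟩
  -- Step 7 : helper lemmas
  have pair : ∀ j x y : ℤ, x ≠ y → (x, j) ∈ bdryH F → (y, j) ∈ bdryH F →
      2 ≤ ((bdryH F).filter fun p => p.2 = j).card := by
    intro j x y hxy hx hy
    have hsub : ({(x,j),(y,j)} : Finset (ℤ×ℤ)) ⊆ (bdryH F).filter fun p => p.2 = j := by
      intro p hp
      rcases mem_insert.1 hp with rfl | hp
      · exact mem_filter.2 ⟨hx, rfl⟩
      · rw [mem_singleton.1 hp]; exact mem_filter.2 ⟨hy, rfl⟩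
    have hc2 : ({(x,j),(y,j)} : Finset (ℤ×ℤ)).card = 2 := by
      rw [card_insert_of_notMem (by simp [Prod.ext_iff, hxy]), card_singleton]
    calc 2 = _ := hc2.symm
    _ ≤ _ := card_le_card hsub
  have quad : ∀ j x y z w : ℤ, x ≠ y → x ≠ z → x ≠ w → y ≠ z → y ≠ w → z ≠ w →
      (x, j) ∈ bdryH F → (y, j) ∈ bdryH F → (z, j) ∈ bdryH F → (w, j) ∈ bdryH F →
      4 ≤ ((bdryH F).filter fun p => p.2 = j).card := by
    intro j x y z w h1 h2 h3 h4 h5 h6 hx hy hz hw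
    have hsub : ({(x,j),(y,j),(z,j),(w,j)} : Finset (ℤ×ℤ)) ⊆
        (bdryH F).filter fun p => p.2 = j := by
      intro p hp
      simp only [mem_insert, mem_singleton] at hp
      rcases hp with rfl | rfl | rfl | rfl
      · exact mem_filter.2 ⟨hx, rfl⟩
      · exact mem_filter.2 ⟨hy, rfl⟩
      · exact mem_filter.2 ⟨hz, rfl⟩
      · exact mem_filter.2 ⟨hw, rfl⟩
    have hc4 : ({(x,j),(y,j),(z,j),(w,j)} : Finset (ℤ×ℤ)).card = 4 := by
      rw [card_insert_of_notMem (by simp [Prod.ext_iff, h1, h2, h3]),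
        card_insert_of_notMem (by simp [Prod.ext_iff, h4, h5]),
        card_insert_of_notMem (by simp [Prod.ext_iff, h6]), card_singleton]
    calc 4 = _ := hc4.symm
    _ ≤ _ := card_le_card hsub
  -- Step 8 : per-column bounds
  have hC1 : 2 ≤ ((bdryH F).filter fun p => p.2 = 1).card := by
    apply pair 1 0 (n:ℤ) (by omega)
    · rw [mem_bdryH]
      right
      refine ⟨fun hc => ?_, ?_⟩
      · have := hbound _ hc; omega
      · rw [show (0:ℤ)+1 = 1 by ring]; exact hcol1 1 (by omega) (by omega)
    · rw [mem_bdryH]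
      left
      refine ⟨hcol1 (n:ℤ) (by omega) le_rfl, fun hc => ?_⟩
      have h2 : (n:ℤ)+1 ≤ (n:ℤ) := (hbound _ hc).2.1
      omega
  have hCj : ∀ j ∈ Icc (2:ℤ) (n:ℤ),
      (if ((2:ℤ), j) ∈ F then 2 else 4) ≤ ((bdryH F).filter fun p => p.2 = j).card := by
    intro j hj
    obtain ⟨hj1, hj2⟩ := mem_Icc.1 hj
    obtain ⟨i, hi1, hi2, hch⟩ := hcolj j hj1 hj2
    by_cases h2 : ((2:ℤ), j) ∈ F
    · rw [if_pos h2]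
      have hi_eq : i = 2 := by have := (hch 2).1 h2; omega
      apply pair j 0 2 (by omega)
      · rw [mem_bdryH]
        right
        refine ⟨fun hc => ?_, (hch (0+1)).2 (by omega)⟩
        have := (hch 0).1 hc; omega
      · rw [mem_bdryH]
        left
        refine ⟨h2, fun hc => ?_⟩
        have := (hch (2+1)).1 hc; omega
    · rw [if_neg h2]
      have hi3 : 3 ≤ i := by
        rcases Int.lt_or_le i 3 with h | h
        · exfalso
          have : i = 2 := by omega
          exact h2 ((hch 2).2 (Or.inr this.symm))
        · exact h
      apply quad j 0 1 (i-1) i (by omega) (by omega) (by omega) (by omega) (by omega) (by omega)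
      · rw [mem_bdryH]
        right
        refine ⟨fun hc => ?_, (hch (0+1)).2 (by omega)⟩
        have := (hch 0).1 hc; omega
      · rw [mem_bdryH]
        left
        refine ⟨(hch 1).2 (Or.inl rfl), fun hc => ?_⟩
        have := (hch (1+1)).1 hc; omega
      · rw [mem_bdryH]
        right
        refine ⟨fun hc => ?_, (hch (i-1+1)).2 (by omega)⟩
        have := (hch (i-1)).1 hc; omega
      · rw [mem_bdryH]
        left
        refine ⟨(hch i).2 (Or.inr rfl), fun hc => ?_⟩
        have := (hch (i+1)).1 hc; omega
  -- Step 9 : summation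
  have hsplit : ∑ j ∈ Icc (1:ℤ) (n:ℤ), ((bdryH F).filter fun p => p.2 = j).card =
      ((bdryH F).filter fun p => p.2 = 1).card +
       ∑ j ∈ Icc (2:ℤ) (n:ℤ), ((bdryH F).filter fun p => p.2 = j).card := by
    rw [← Finset.add_sum_erase _ _ (mem_Icc.2 ⟨le_refl (1:ℤ), by omega⟩)]
    have he : (Icc (1:ℤ) (n:ℤ)).erase 1 = Icc (2:ℤ) (n:ℤ) := by
      ext x
      simp only [mem_erase, mem_Icc]
      omega
    rw [he]
  have hsum2 : ∑ j ∈ Icc (2:ℤ) (n:ℤ), (if ((2:ℤ), j) ∈ F then 2 else 4) =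
      2 * ((Icc (2:ℤ) (n:ℤ)).filter fun j => ((2:ℤ), j) ∈ F).card +
      4 * ((Icc (2:ℤ) (n:ℤ)).filter fun j => ¬ ((2:ℤ), j) ∈ F).card := by
    rw [Finset.sum_ite]
    simp [mul_comm]
  have hcd : ((Icc (2:ℤ) (n:ℤ)).filter fun j => ((2:ℤ), j) ∈ F).card +
      ((Icc (2:ℤ) (n:ℤ)).filter fun j => ¬ ((2:ℤ), j) ∈ F).card = (Icc (2:ℤ) (n:ℤ)).card :=
    Finset.card_filter_add_card_filter_not (fun j => ((2:ℤ), j) ∈ F)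
  have hIcc : (Icc (2:ℤ) (n:ℤ)).card = n - 1 := by
    rw [Int.card_Icc]; omega
  have hle : ∑ j ∈ Icc (2:ℤ) (n:ℤ), (if ((2:ℤ), j) ∈ F then 2 else 4) ≤
      ∑ j ∈ Icc (2:ℤ) (n:ℤ), ((bdryH F).filter fun p => p.2 = j).card :=
    Finset.sum_le_sum hCj
  rw [hfib, hsplit]
  omega


noncomputable def F0 (n : ℕ) : Finset (ℤ × ℤ) :=
  ((Icc (1:ℤ) (n:ℤ)).image fun j => ((1:ℤ), j)) ∪
  ((Icc (1:ℤ) (n:ℤ)).image fun i => (i, (1:ℤ))) ∪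
  ((Icc (2:ℤ) (n:ℤ)).image fun i => (i, i))

lemma mem_F0 {n : ℕ} {a b : ℤ} : (a, b) ∈ F0 n ↔
    (a = 1 ∧ 1 ≤ b ∧ b ≤ (n:ℤ)) ∨ (b = 1 ∧ 1 ≤ a ∧ a ≤ (n:ℤ)) ∨
    (a = b ∧ 2 ≤ a ∧ a ≤ (n:ℤ)) := by
  simp only [F0, mem_union, mem_image, mem_Icc, Prod.ext_iff]
  constructor
  · rintro ((⟨j, hj, h1, h2⟩ | ⟨i, hi, h1, h2⟩) | ⟨i, hi, h1, h2⟩)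
    · exact Or.inl (by omega)
    · exact Or.inr (Or.inl (by omega))
    · exact Or.inr (Or.inr (by omega))
  · rintro (⟨h1, h2, h3⟩ | ⟨h1, h2, h3⟩ | ⟨h1, h2, h3⟩)
    · exact Or.inl (Or.inl ⟨b, by omega, by omega, rfl⟩)
    · exact Or.inl (Or.inr ⟨a, by omega, rfl, by omega⟩)
    · exact Or.inr ⟨a, by omega, rfl, by omega⟩

lemma F0_swap (n : ℕ) : (F0 n).image Prod.swap = F0 n := by
  ext ⟨a, b⟩
  rw [mem_swap, mem_F0, mem_F0]
  constructor <;> intro h <;> omega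

lemma rowSum_swap (F : Finset (ℤ × ℤ)) (i : ℤ) :
    rowSum (F.image Prod.swap) i = colSum F i := by
  rw [rowSum, colSum]
  have : (F.image Prod.swap).filter (fun p => p.1 = i) =
      (F.filter fun p => p.2 = i).image Prod.swap := by
    ext ⟨a, b⟩
    rw [mem_filter, mem_swap, mem_swap, mem_filter]
  rw [this, Finset.card_image_of_injective _ Prod.swap_injective]

lemma colSum_swap (F : Finset (ℤ × ℤ)) (j : ℤ) :
    colSum (F.image Prod.swap) j = rowSum F j := by
  rw [rowSum, colSum]
  have : (F.image Prod.swap).filter (fun p => p.2 = j) =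
      (F.filter fun p => p.1 = j).image Prod.swap := by
    ext ⟨a, b⟩
    rw [mem_filter, mem_swap, mem_swap, mem_filter]
  rw [this, Finset.card_image_of_injective _ Prod.swap_injective]

lemma rowSum_F0 (n : ℕ) (hn : 2 ≤ n) : ∀ i : ℤ, rowSum (F0 n) i =
    if i = 1 then n else if 1 ≤ i ∧ i ≤ (n : ℤ) then 2 else 0 := by
  have hn' : (2:ℤ) ≤ (n:ℤ) := by exact_mod_cast hn
  intro i
  by_cases h1 : i = 1
  · subst h1
    rw [if_pos rfl, rowSum]
    have : (F0 n).filter (fun p => p.1 = 1) = (Icc (1:ℤ) (n:ℤ)).image fun j => ((1:ℤ), j) := by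
      ext ⟨a, b⟩
      simp only [mem_filter, mem_image, mem_Icc, Prod.ext_iff, mem_F0]
      constructor
      · rintro ⟨h, rfl⟩
        exact ⟨b, by omega, rfl, rfl⟩
      · rintro ⟨j, hj, rfl, rfl⟩
        exact ⟨by omega, rfl⟩
    rw [this, Finset.card_image_of_injective _ (fun a b h => by simpa [Prod.ext_iff] using h),
      Int.card_Icc]
    omega
  · by_cases h2 : 1 ≤ i ∧ i ≤ (n:ℤ)
    · rw [if_neg h1, if_pos h2, rowSum]
      have : (F0 n).filter (fun p => p.1 = i) = {(i, (1:ℤ)), (i, i)} := by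
        ext ⟨a, b⟩
        simp only [mem_filter, mem_insert, mem_singleton, Prod.ext_iff, mem_F0]
        constructor
        · rintro ⟨h, rfl⟩
          omega
        · rintro (⟨rfl, rfl⟩ | ⟨rfl, rfl⟩)
          · exact ⟨by omega, rfl⟩
          · exact ⟨by omega, rfl⟩
      rw [this, card_insert_of_notMem (by simp [Prod.ext_iff]; omega), card_singleton]
    · rw [if_neg h1, if_neg h2, rowSum]
      have : (F0 n).filter (fun p => p.1 = i) = ∅ := by
        ext ⟨a, b⟩
        simp only [mem_filter, notMem_empty, iff_false, not_and, mem_F0]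
        intro h
        omega
      rw [this, card_empty]

lemma colSum_F0 (n : ℕ) (hn : 2 ≤ n) : ∀ j : ℤ, colSum (F0 n) j =
    if j = 1 then n else if 1 ≤ j ∧ j ≤ (n : ℤ) then 2 else 0 := by
  intro j
  conv_lhs => rw [← F0_swap n]
  rw [colSum_swap, rowSum_F0 n hn]

set_option maxHeartbeats 1000000 in
lemma Lh_F0_le (n : ℕ) (hn : 2 ≤ n) : (bdryH (F0 n)).card ≤ 4 * n - 4 := by
  have hn' : (2:ℤ) ≤ (n:ℤ) := by exact_mod_cast hn
  have hsub : bdryH (F0 n) ⊆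
      ((Icc (1:ℤ) (n:ℤ)).image fun j => ((0:ℤ), j)) ∪
      {((n:ℤ), (1:ℤ)), ((2:ℤ), (2:ℤ))} ∪
      ((Icc (3:ℤ) (n:ℤ)).image fun j => ((1:ℤ), j)) ∪
      ((Icc (3:ℤ) (n:ℤ)).image fun j => (j - 1, j)) ∪
      ((Icc (3:ℤ) (n:ℤ)).image fun j => (j, j)) := by
    rintro ⟨a, b⟩ h
    rw [mem_bdryH, mem_F0, mem_F0] at h
    simp only [mem_union, mem_image, mem_insert, mem_singleton, mem_Icc, Prod.ext_iff]
    by_cases hc1 : a = 0 ∧ 1 ≤ b ∧ b ≤ (n:ℤ)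
    · exact Or.inl (Or.inl (Or.inl (Or.inl ⟨b, by omega, by omega, rfl⟩)))
    by_cases hc2 : a = (n:ℤ) ∧ b = 1
    · exact Or.inl (Or.inl (Or.inl (Or.inr (Or.inl ⟨by omega, by omega⟩))))
    by_cases hc3 : a = 2 ∧ b = 2
    · exact Or.inl (Or.inl (Or.inl (Or.inr (Or.inr ⟨by omega, by omega⟩))))
    by_cases hc4 : a = 1 ∧ 3 ≤ b ∧ b ≤ (n:ℤ)
    · exact Or.inl (Or.inl (Or.inr ⟨b, by omega, by omega, rfl⟩))
    by_cases hc5 : a = b - 1 ∧ 3 ≤ b ∧ b ≤ (n:ℤ)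
    · exact Or.inl (Or.inr ⟨b, by omega, by omega, rfl⟩)
    by_cases hc6 : a = b ∧ 3 ≤ b ∧ b ≤ (n:ℤ)
    · exact Or.inr ⟨b, by omega, by omega, rfl⟩
    exfalso
    omega
  refine le_trans (card_le_card hsub) ?_
  · refine le_trans (card_union_le _ _) ?_
    have h5 : ((Icc (3:ℤ) (n:ℤ)).image fun j => (j, j)).card ≤ n - 2 := by
      refine le_trans (card_image_le) ?_
      rw [Int.card_Icc]; omega
    refine le_trans (Nat.add_le_add (card_union_le _ _) h5) ?_
    have h4 : ((Icc (3:ℤ) (n:ℤ)).image fun j => (j - 1, j)).card ≤ n - 2 := by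
      refine le_trans (card_image_le) ?_
      rw [Int.card_Icc]; omega
    refine le_trans (Nat.add_le_add (Nat.add_le_add (card_union_le _ _) h4) le_rfl) ?_
    have h3 : ((Icc (3:ℤ) (n:ℤ)).image fun j => ((1:ℤ), j)).card ≤ n - 2 := by
      refine le_trans (card_image_le) ?_
      rw [Int.card_Icc]; omega
    refine le_trans (Nat.add_le_add (Nat.add_le_add (Nat.add_le_add (card_union_le _ _) h3) le_rfl) le_rfl) ?_
    have h1 : ((Icc (1:ℤ) (n:ℤ)).image fun j => ((0:ℤ), j)).card ≤ n := by
      refine le_trans (card_image_le) ?_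
      rw [Int.card_Icc]; omega
    have h2 : ({((n:ℤ), (1:ℤ)), ((2:ℤ), (2:ℤ))} : Finset (ℤ × ℤ)).card ≤ 2 :=
      le_trans (card_insert_le _ _) (by simp)
    omega

/-- For `m = n ≥ 2` and line sums `R = C = (n, 2, 2, …, 2)`, every finite set with
these row and column sums has horizontal and vertical boundary lengths at least
`4n - 4`, and there exists a set attaining both bounds. -/
theorem example_two_boundary (n : ℕ) (hn : 2 ≤ n) :
    (∀ F : Finset (ℤ × ℤ),
      (∀ i : ℤ, rowSum F i =
        if i = 1 then n else if 1 ≤ i ∧ i ≤ (n : ℤ) then 2 else 0) →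
      (∀ j : ℤ, colSum F j =
        if j = 1 then n else if 1 ≤ j ∧ j ≤ (n : ℤ) then 2 else 0) →
      4 * n - 4 ≤ Lh F ∧ 4 * n - 4 ≤ Lv F) ∧
    ∃ F : Finset (ℤ × ℤ),
      (∀ i : ℤ, rowSum F i =
        if i = 1 then n else if 1 ≤ i ∧ i ≤ (n : ℤ) then 2 else 0) ∧
      (∀ j : ℤ, colSum F j =
        if j = 1 then n else if 1 ≤ j ∧ j ≤ (n : ℤ) then 2 else 0) ∧
      Lh F = 4 * n - 4 ∧ Lv F = 4 * n - 4 := by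
  have hLh0 : Lh (F0 n) = 4 * n - 4 :=
    le_antisymm (Lh_F0_le n hn) (Lh_lower n hn _ (rowSum_F0 n hn) (colSum_F0 n hn))
  constructor
  · intro F hR hC
    refine ⟨Lh_lower n hn F hR hC, ?_⟩
    rw [Lv_eq_Lh_swap]
    apply Lh_lower n hn
    · intro i; rw [rowSum_swap]; exact hC i
    · intro j; rw [colSum_swap]; exact hR j
  · refine ⟨F0 n, rowSum_F0 n hn, colSum_F0 n hn, hLh0, ?_⟩
    rw [Lv_eq_Lh_swap, F0_swap]
    exact hLh0
end
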